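/- Let f : X → Y be a Reedy fibration between marked bisimplicial sets, let n ≥ 2, and let i : A ⊆ Δⁿ be a simplicial subset containing Δ^{0,1}. Then the following are equivalent: (1) the map ⟨i^ℒ \ f⟩ : (Δⁿ)^ℒ \ X → (Δⁿ)^ℒ \ Y ×_{A^ℒ \ Y} A^ℒ \ X is a trivial Kan fibration; (2) for every marked edge e ∈ X_{1,0}, the map p_e : (Δⁿ \ X̊)^e → (Δⁿ \ Y̊)^{f(e)} ×_{(A \ Y̊)^{f(e)}} (A \ X̊)^e is a trivial Kan fibration. -/

import Mathlib

set_option linter.unusedVariables false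

open CategoryTheory CategoryTheory.Limits Simplicial Opposite

namespace Paper

abbrev BSSet : Type 1 := SimplexCategoryᵒᵖ × SimplexCategoryᵒᵖ ⥤ Type

@[simps]
def boxObj (A B : SSet.{0}) : BSSet where
  obj p := A.obj p.1 × B.obj p.2
  map f := ↾fun x => (A.map f.1 x.1, B.map f.2 x.2)
  map_id p := by ext x <;> simp
  map_comp f g := by ext x <;> simp

@[simps]
def boxMap {A A' B B' : SSet.{0}} (u : A ⟶ A') (v : B ⟶ B') :
    boxObj A B ⟶ boxObj A' B' where
  app p := ↾fun x => (u.app p.1 x.1, v.app p.2 x.2)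
  naturality p q φ := by
    refine ConcreteCategory.hom_ext _ _ fun x => ?_
    simp only [types_comp_apply, TypeCat.ofHom_apply]
    exact Prod.ext (NatTrans.naturality_apply u φ.1 x.1) (NatTrans.naturality_apply v φ.2 x.2)

lemma boxMap_id (A B : SSet.{0}) : boxMap (𝟙 A) (𝟙 B) = 𝟙 (boxObj A B) := rfl

lemma boxMap_comp {A A' A'' B B' B'' : SSet.{0}} (u : A ⟶ A') (u' : A' ⟶ A'')
    (v : B ⟶ B') (v' : B' ⟶ B'') :
    boxMap (u ≫ u') (v ≫ v') = boxMap u v ≫ boxMap u' v' := rfl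

def under (A : SSet.{0}) (X : BSSet) : SSet.{0} where
  obj n := boxObj A (SSet.stdSimplex.obj n.unop) ⟶ X
  map φ := ↾fun σ => boxMap (𝟙 A) (SSet.stdSimplex.map φ.unop) ≫ σ
  map_id n := by
    refine ConcreteCategory.hom_ext _ _ fun σ => ?_
    show boxMap (𝟙 A) (SSet.stdSimplex.map (𝟙 n.unop)) ≫ σ = σ
    erw [CategoryTheory.Functor.map_id, boxMap_id, Category.id_comp]
  map_comp {n m k} φ ψ := by
    refine ConcreteCategory.hom_ext _ _ fun σ => ?_
    show boxMap (𝟙 A) (SSet.stdSimplex.map (ψ.unop ≫ φ.unop)) ≫ σ = _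
    erw [Functor.map_comp, show (𝟙 A : A ⟶ A) = 𝟙 A ≫ 𝟙 A from (Category.id_comp _).symm,
      boxMap_comp, Category.assoc]
    rfl

def overBS (X : BSSet) (B : SSet.{0}) : SSet.{0} where
  obj n := boxObj (SSet.stdSimplex.obj n.unop) B ⟶ X
  map φ := ↾fun σ => boxMap (SSet.stdSimplex.map φ.unop) (𝟙 B) ≫ σ
  map_id n := by
    refine ConcreteCategory.hom_ext _ _ fun σ => ?_
    show boxMap (SSet.stdSimplex.map (𝟙 n.unop)) (𝟙 B) ≫ σ = σ
    erw [CategoryTheory.Functor.map_id, boxMap_id, Category.id_comp]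
  map_comp {n m k} φ ψ := by
    refine ConcreteCategory.hom_ext _ _ fun σ => ?_
    show boxMap (SSet.stdSimplex.map (ψ.unop ≫ φ.unop)) (𝟙 B) ≫ σ = _
    erw [Functor.map_comp, show (𝟙 B : B ⟶ B) = 𝟙 B ≫ 𝟙 B from (Category.id_comp _).symm,
      boxMap_comp, Category.assoc]
    rfl

@[simps]
def underWhisker {A A' : SSet.{0}} (u : A ⟶ A') (X : BSSet) :
    under A' X ⟶ under A X where
  app n := ↾fun σ => boxMap u (𝟙 _) ≫ σ
  naturality n m φ := rfl

@[simps]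
def underPush (A : SSet.{0}) {X Y : BSSet} (f : X ⟶ Y) :
    under A X ⟶ under A Y where
  app n := ↾fun σ => σ ≫ f
  naturality n m φ := rfl

@[simps]
def overPush (B : SSet.{0}) {X Y : BSSet} (f : X ⟶ Y) :
    overBS X B ⟶ overBS Y B where
  app n := ↾fun σ => σ ≫ f
  naturality n m φ := rfl

---- new chunk

/-- The functor `A □ - : SSet ⥤ BSSet`. -/
@[simps]
def boxLFunctor (A : SSet.{0}) : SSet.{0} ⥤ BSSet where
  obj B := boxObj A B
  map v := boxMap (𝟙 A) v
  map_id B := rfl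
  map_comp v w := rfl

/-- The functor `- □ B : SSet ⥤ BSSet`. -/
@[simps]
def boxRFunctor (B : SSet.{0}) : SSet.{0} ⥤ BSSet where
  obj A := boxObj A B
  map u := boxMap u (𝟙 B)
  map_id A := rfl
  map_comp u w := rfl

/-- The functor `A \ - : BSSet ⥤ SSet`. -/
@[simps]
def underFunctor (A : SSet.{0}) : BSSet ⥤ SSet.{0} where
  obj X := under A X
  map f := underPush A f
  map_id X := rfl
  map_comp f g := rfl

/-- The functor `- / B : BSSet ⥤ SSet`. -/
@[simps]
def overFunctor (B : SSet.{0}) : BSSet ⥤ SSet.{0} where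
  obj X := overBS X B
  map f := overPush B f
  map_id X := rfl
  map_comp f g := rfl

/-- A map of simplicial sets is a Kan fibration if it has the right lifting property
with respect to all horn inclusions `Λ[n, i] ⟶ Δ[n]`, `n ≥ 1`, `0 ≤ i ≤ n`. -/
def IsKanFibration {S T : SSet.{0}} (f : S ⟶ T) : Prop :=
  ∀ (n : ℕ) (i : Fin (n + 2)), HasLiftingProperty (SSet.horn (n + 1) i).ι f

/-- A map of simplicial sets is a trivial Kan fibration if it has the right lifting property
with respect to all boundary inclusions `∂Δ[n] ⟶ Δ[n]`. -/
def IsTrivialKanFibration {S T : SSet.{0}} (f : S ⟶ T) : Prop :=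
  ∀ (n : ℕ), HasLiftingProperty (SSet.boundary n).ι f

/-- A map of simplicial sets is an inner fibration if it has the right lifting property
with respect to all inner horn inclusions `Λ[n, i] ⟶ Δ[n]`, `0 < i < n`. -/
def IsInnerFibration {S T : SSet.{0}} (f : S ⟶ T) : Prop :=
  ∀ (n : ℕ) (i : Fin (n + 1)), 0 < (i : ℕ) → (i : ℕ) < n →
    HasLiftingProperty (SSet.horn n i).ι f

lemma underSq {A A' : SSet.{0}} (u : A ⟶ A') {X Y : BSSet} (f : X ⟶ Y) :
    underWhisker u X ≫ underPush A f = underPush A' f ≫ underWhisker u Y := rfl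

/-- The gap map `⟨u \ f⟩ : A' \ X ⟶ A \ X ×_{A \ Y} A' \ Y`. -/
noncomputable def underGap {A A' : SSet.{0}} (u : A ⟶ A') {X Y : BSSet} (f : X ⟶ Y) :
    under A' X ⟶ pullback (underPush A f) (underWhisker u Y) :=
  pullback.lift (underWhisker u X) (underPush A' f) (underSq u f)

/-- A map of bisimplicial sets is a Reedy fibration if for every monomorphism `u : A ⟶ A'`
of simplicial sets, the gap map `⟨u \ f⟩` is a Kan fibration. -/
def IsReedyFibration {X Y : BSSet} (f : X ⟶ Y) : Prop :=
  ∀ ⦃A A' : SSet.{0}⦄ (u : A ⟶ A'), Mono u → IsKanFibration (underGap u f)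

/-- A bisimplicial set is Reedy fibrant if for every monomorphism `u : A ⟶ A'` of
simplicial sets, the restriction map `⟨u \ X⟩ : A' \ X ⟶ A \ X` is a Kan fibration. -/
def IsReedyFibrant (X : BSSet) : Prop :=
  ∀ ⦃A A' : SSet.{0}⦄ (u : A ⟶ A'), Mono u → IsKanFibration (underWhisker u X)

/-- The cylinder `A × Δ¹` on a simplicial set. -/
def cyl (A : SSet.{0}) : SSet.{0} where
  obj n := A.obj n × Δ[1].obj n
  map f := ↾fun x => (A.map f x.1, Δ[1].map f x.2)
  map_id n := by ext x <;> simp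
  map_comp f g := by ext x <;> simp

/-- The inclusion `A ⟶ A × Δ¹` at the vertex `k` of `Δ¹`. -/
def cylIncl (k : Fin 2) (A : SSet.{0}) : A ⟶ cyl A where
  app n := ↾fun a => (a, SSet.stdSimplex.const 1 k n)
  naturality n m f := rfl

/-- Functoriality of the cylinder. -/
def cylMap {A B : SSet.{0}} (f : A ⟶ B) : cyl A ⟶ cyl B where
  app n := ↾fun x => (f.app n x.1, x.2)
  naturality n m φ := by
    refine ConcreteCategory.hom_ext _ _ fun x => ?_
    simp only [types_comp_apply, TypeCat.ofHom_apply]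
    exact Prod.ext (NatTrans.naturality_apply f φ x.1) rfl

lemma cylIncl_cylMap (k : Fin 2) {A B : SSet.{0}} (f : A ⟶ B) :
    cylIncl k A ≫ cylMap f = f ≫ cylIncl k B := rfl

/-- Two maps of simplicial sets are related by an elementary homotopy if there is a
cylinder homotopy from one to the other. -/
def HomotopicOne {A B : SSet.{0}} (f g : A ⟶ B) : Prop :=
  ∃ H : cyl A ⟶ B, cylIncl 0 A ≫ H = f ∧ cylIncl 1 A ≫ H = g

/-- A Kan complex: every horn has a filler. -/
def IsKanComplex (S : SSet.{0}) : Prop :=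
  ∀ (n : ℕ) (i : Fin (n + 2)) (g : (Λ[n + 1, i] : SSet.{0}) ⟶ S),
    ∃ h : Δ[n + 1] ⟶ S, (SSet.horn (n + 1) i).ι ≫ h = g

/-- Precomposition on homotopy classes of maps. -/
def precompClass {A B : SSet.{0}} (f : A ⟶ B) (Z : SSet.{0}) :
    Quot (@HomotopicOne B Z) → Quot (@HomotopicOne A Z) :=
  Quot.lift (fun g => Quot.mk _ (f ≫ g)) (by
    rintro g g' ⟨H, h0, h1⟩
    apply Quot.sound
    refine ⟨cylMap f ≫ H, ?_, ?_⟩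
    · rw [← Category.assoc, cylIncl_cylMap, Category.assoc, h0]
    · rw [← Category.assoc, cylIncl_cylMap, Category.assoc, h1])

/-- A map of simplicial sets is a weak homotopy equivalence iff for every Kan complex `Z`
the induced map on homotopy classes of maps into `Z` is a bijection. -/
def WeakEquiv {A B : SSet.{0}} (f : A ⟶ B) : Prop :=
  ∀ Z : SSet.{0}, IsKanComplex Z → Function.Bijective (precompClass f Z)

/-- A commutative square of simplicial sets (with `g` thought of as the right-hand vertical
map) is a homotopy pullback if for some factorization of `g` as a weak equivalence followed
by a Kan fibration, the induced gap map to the strict pullback is a weak equivalence. -/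
noncomputable def IsHomotopyPullback {W U V Z : SSet.{0}}
    (a : W ⟶ U) (b : W ⟶ V) (g : U ⟶ Z) (h : V ⟶ Z) (comm : a ≫ g = b ≫ h) : Prop :=
  ∃ (U' : SSet.{0}) (w : U ⟶ U') (p : U' ⟶ Z) (hwp : w ≫ p = g),
    WeakEquiv w ∧ IsKanFibration p ∧
      WeakEquiv (pullback.lift (a ≫ w) b
        (by rw [Category.assoc, hwp, comm]) : W ⟶ pullback p h)

/-- The spine of `Δ[n]`: the union of the edges `Δ{i, i+1}`. -/
def spine (n : ℕ) : SSet.{0} where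
  obj m := { a : Δ[n].obj m //
    ∃ i : ℕ, ∀ j, ((SSet.stdSimplex.asOrderHom a) j : ℕ) = i ∨ ((SSet.stdSimplex.asOrderHom a) j : ℕ) = i + 1 }
  map f := ↾fun a => ⟨Δ[n].map f a.1, by
    obtain ⟨i, hi⟩ := a.2
    exact ⟨i, fun j => hi _⟩⟩
  map_id m := by
    refine ConcreteCategory.hom_ext _ _ fun a => ?_
    apply Subtype.ext
    show Δ[n].map (𝟙 m) a.1 = a.1
    simp
  map_comp f g := by
    refine ConcreteCategory.hom_ext _ _ fun a => ?_
    apply Subtype.ext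
    show Δ[n].map (f ≫ g) a.1 = Δ[n].map g (Δ[n].map f a.1)
    simp

def spineIncl (n : ℕ) : spine n ⟶ Δ[n] where
  app m := ↾fun a => a.1
  naturality n m f := rfl


/-- A Segal space: a Reedy fibrant bisimplicial set whose Segal maps
`X_n ⟶ X_1 ×_{X_0} ⋯ ×_{X_0} X_1` (i.e. the restrictions `Δⁿ \\ X ⟶ Iₙ \\ X` along the
spine inclusions) are weak homotopy equivalences for `n ≥ 2`. -/
def IsSegalSpace (X : BSSet) : Prop :=
  IsReedyFibrant X ∧ ∀ n : ℕ, 2 ≤ n → WeakEquiv (underWhisker (spineIncl n) X)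

/-- The unique map to `⦋0⦌` in the simplex category. -/
def toZero (m : SimplexCategory) : m ⟶ ⦋0⦌ :=
  SimplexCategory.Hom.mk ⟨fun _ => 0, fun _ _ _ => le_rfl⟩

lemma toZero_unique {m : SimplexCategory} (f g : m ⟶ ⦋0⦌) : f = g := by
  apply SimplexCategory.Hom.ext
  apply OrderHom.ext
  funext j
  apply Fin.ext
  have h1 : ((f.toOrderHom j : Fin (⦋0⦌.len + 1)) : ℕ) < 0 + 1 := (f.toOrderHom j).isLt
  have h2 : ((g.toOrderHom j : Fin (⦋0⦌.len + 1)) : ℕ) < 0 + 1 := (g.toOrderHom j).isLt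
  omega

lemma toZero_comp {m m' : SimplexCategory} (φ : m' ⟶ m) :
    φ ≫ toZero m = toZero m' :=
  toZero_unique _ _

lemma boxMapR_comp (A : SSet.{0}) {B B' B'' : SSet.{0}} (v : B ⟶ B') (w : B' ⟶ B'') :
    boxMap (𝟙 A) (v ≫ w) = boxMap (𝟙 A) v ≫ boxMap (𝟙 A) w := rfl

/-- The map `Δ[1] □ Δ[0] ⟶ X` corresponding to an element `e ∈ X_{1,0}` by the Yoneda lemma. -/
def yonedaBox {X : BSSet} (e : X.obj (op ⦋1⦌, op ⦋0⦌)) :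
    boxObj Δ[1] Δ[0] ⟶ X where
  app p := ↾fun x =>
    X.map ((SSet.stdSimplex.objEquiv x.1).op,
      (SSet.stdSimplex.objEquiv x.2).op) e
  naturality p q φ := by
    refine ConcreteCategory.hom_ext _ _ fun x => ?_
    simp only [types_comp_apply, TypeCat.ofHom_apply]
    rw [← FunctorToTypes.map_comp_apply]
    rfl

def fApp {X Y : BSSet} (f : X ⟶ Y) (e : X.obj (op ⦋1⦌, op ⦋0⦌)) : Y.obj (op ⦋1⦌, op ⦋0⦌) :=
  f.app (op ⦋1⦌, op ⦋0⦌) e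

lemma yonedaBox_comp {X Y : BSSet} (f : X ⟶ Y) (e : X.obj (op ⦋1⦌, op ⦋0⦌)) :
    yonedaBox e ≫ f = yonedaBox (fApp f e) := by
  apply NatTrans.ext
  funext p
  refine ConcreteCategory.hom_ext _ _ fun x => ?_
  exact NatTrans.naturality_apply f _ e

/-- The constant `Δ[1] □ Δ[m]`-diagram in `X` with value the edge `e`. -/
def eConst {X : BSSet} (m : SimplexCategory) (e : X.obj (op ⦋1⦌, op ⦋0⦌)) :
    boxObj Δ[1] (SSet.stdSimplex.obj m) ⟶ X :=
  boxMap (𝟙 Δ[1]) (SSet.stdSimplex.map (toZero m)) ≫ yonedaBox e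

lemma eConst_whisker {X : BSSet} {m m' : SimplexCategory} (φ : m' ⟶ m)
    (e : X.obj (op ⦋1⦌, op ⦋0⦌)) :
    boxMap (𝟙 Δ[1]) (SSet.stdSimplex.map φ) ≫ eConst m e = eConst m' e := by
  erw [eConst, eConst, ← Category.assoc, ← boxMapR_comp, ← Functor.map_comp, toZero_comp]

lemma eConst_comp {X Y : BSSet} (f : X ⟶ Y) {m : SimplexCategory}
    (e : X.obj (op ⦋1⦌, op ⦋0⦌)) :
    eConst m e ≫ f = eConst m (fApp f e) := by
  rw [eConst, eConst, Category.assoc, yonedaBox_comp]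

/-- `(B \ X)^e`: the simplicial set of `B`-shaped diagrams in `X` whose restriction along the
edge `ι : Δ[1] ⟶ B` is constant at the edge `e ∈ X_{1,0}`. -/
def fib {B : SSet.{0}} (ι : Δ[1] ⟶ B) (X : BSSet) (e : X.obj (op ⦋1⦌, op ⦋0⦌)) :
    SSet.{0} where
  obj n := { σ : boxObj B (SSet.stdSimplex.obj n.unop) ⟶ X //
      boxMap ι (𝟙 _) ≫ σ = eConst n.unop e }
  map {n m} φ := ↾fun σ => ⟨boxMap (𝟙 B) (SSet.stdSimplex.map φ.unop) ≫ σ.1, by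
    rw [← Category.assoc,
      show boxMap ι (𝟙 _) ≫ boxMap (𝟙 B) (SSet.stdSimplex.map φ.unop)
        = boxMap (𝟙 Δ[1]) (SSet.stdSimplex.map φ.unop) ≫ boxMap ι (𝟙 _) from rfl,
      Category.assoc, σ.2, eConst_whisker]⟩
  map_id n := by
    refine ConcreteCategory.hom_ext _ _ fun σ => ?_
    apply Subtype.ext
    show boxMap (𝟙 B) (SSet.stdSimplex.map (𝟙 n.unop)) ≫ σ.1 = σ.1
    erw [CategoryTheory.Functor.map_id, boxMap_id, Category.id_comp]
  map_comp {n m k} φ ψ := by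
    refine ConcreteCategory.hom_ext _ _ fun σ => ?_
    apply Subtype.ext
    show boxMap (𝟙 B) (SSet.stdSimplex.map (ψ.unop ≫ φ.unop)) ≫ σ.1 = _
    erw [Functor.map_comp, boxMapR_comp, Category.assoc]
    rfl

/-- The forgetful map `(B \ X)^e ⟶ B \ X`. -/
def fibFst {B : SSet.{0}} (ι : Δ[1] ⟶ B) (X : BSSet) (e : X.obj (op ⦋1⦌, op ⦋0⦌)) :
    fib ι X e ⟶ under B X where
  app n := ↾fun σ => σ.1
  naturality n m φ := rfl

/-- Restriction `(B' \ X)^e ⟶ (B \ X)^e` along `u : B ⟶ B'`. -/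
def fibRes {B B' : SSet.{0}} (u : B ⟶ B') (ι : Δ[1] ⟶ B) (X : BSSet)
    (e : X.obj (op ⦋1⦌, op ⦋0⦌)) :
    fib (ι ≫ u) X e ⟶ fib ι X e where
  app n := ↾fun σ => ⟨boxMap u (𝟙 _) ≫ σ.1, by
    rw [← Category.assoc,
      show boxMap ι (𝟙 _) ≫ boxMap u (𝟙 _) = boxMap (ι ≫ u) (𝟙 _) from rfl, σ.2]⟩
  naturality n m φ := rfl

/-- Pushforward `(B \ X)^e ⟶ (B \ Y)^{f(e)}` along `f : X ⟶ Y`. -/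
def fibPush {B : SSet.{0}} (ι : Δ[1] ⟶ B) {X Y : BSSet} (f : X ⟶ Y)
    (e : X.obj (op ⦋1⦌, op ⦋0⦌)) :
    fib ι X e ⟶ fib ι Y (fApp f e) where
  app n := ↾fun σ => ⟨σ.1 ≫ f, by rw [← Category.assoc, σ.2, eConst_comp]⟩
  naturality n m φ := rfl

lemma fibSq {B B' : SSet.{0}} (u : B ⟶ B') (ι : Δ[1] ⟶ B) {X Y : BSSet} (f : X ⟶ Y)
    (e : X.obj (op ⦋1⦌, op ⦋0⦌)) :
    fibRes u ι X e ≫ fibPush ι f e = fibPush (ι ≫ u) f e ≫ fibRes u ι Y (fApp f e) := rfl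

/-- The given square of fibered diagram spaces (restriction on top of pushforward)
is a homotopy pullback. -/
noncomputable def IsCocartAlong {B B' : SSet.{0}} (u : B ⟶ B') (ι : Δ[1] ⟶ B)
    {X Y : BSSet} (f : X ⟶ Y) (e : X.obj (op ⦋1⦌, op ⦋0⦌)) : Prop :=
  IsHomotopyPullback (fibRes u ι X e) (fibPush (ι ≫ u) f e)
    (fibPush ι f e) (fibRes u ι Y (fApp f e)) (fibSq u ι f e)

/-- The gap map `(B' \ X)^e ⟶ (B \ X)^e ×_{(B \ Y)^{f(e)}} (B' \ Y)^{f(e)}`. -/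
noncomputable def fibGap {B B' : SSet.{0}} (u : B ⟶ B') (ι : Δ[1] ⟶ B) {X Y : BSSet}
    (f : X ⟶ Y) (e : X.obj (op ⦋1⦌, op ⦋0⦌)) :
    fib (ι ≫ u) X e ⟶ pullback (fibPush ι f e) (fibRes u ι Y (fApp f e)) :=
  pullback.lift (fibRes u ι X e) (fibPush (ι ≫ u) f e) (fibSq u ι f e)

/-- The morphism `⦋1⦌ ⟶ ⦋n⦌` in the simplex category given by `0 ↦ 0`, `1 ↦ 1`. -/
def edge01Hom (n : ℕ) (h : 1 ≤ n) : (⦋1⦌ : SimplexCategory) ⟶ ⦋n⦌ :=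
  SimplexCategory.Hom.mk ⟨Fin.castLE (by simp only [SimplexCategory.len_mk]; omega),
    (Fin.strictMono_castLE _).monotone⟩

/-- The edge `Δ^{0,1} ⟶ Δⁿ`. -/
def edge01 (n : ℕ) (h : 1 ≤ n) : Δ[1] ⟶ Δ[n] :=
  SSet.stdSimplex.map (edge01Hom n h)

/-- The edge `Δ^{0,1} ⟶ Λ[n, 0]` of the left horn. -/
def edgeHorn (n : ℕ) (h : 2 ≤ n) : Δ[1] ⟶ Λ[n, 0] where
  app m := ↾fun a => ⟨(edge01 n (by omega)).app m a, by
    intro hEq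
    have h2 : (⟨2, by omega⟩ : Fin (n + 1)) ∈
        Set.range (SSet.stdSimplex.asOrderHom ((edge01 n (by omega)).app m a)) ∪ {0} := by
      rw [hEq]; exact Set.mem_univ _
    rcases h2 with ⟨j, hj⟩ | h0
    · have hsmall : ((SSet.stdSimplex.asOrderHom ((edge01 n (by omega)).app m a)) j : ℕ) < 2 :=
        ((SSet.stdSimplex.asOrderHom a) j).isLt
      have hv : ((SSet.stdSimplex.asOrderHom ((edge01 n (by omega)).app m a)) j : ℕ) = 2 :=
        congrArg Fin.val hj
      omega
    · rw [Set.mem_singleton_iff] at h0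
      have := congrArg Fin.val h0
      simp at this⟩
  naturality m m' φ := by
    refine ConcreteCategory.hom_ext _ _ fun a => ?_
    apply Subtype.ext
    exact ConcreteCategory.congr_hom ((edge01 n (by omega)).naturality φ) a

lemma edgeHorn_incl (n : ℕ) (h : 2 ≤ n) :
    edgeHorn n h ≫ (SSet.horn n 0).ι = edge01 n (by omega) := rfl

/-- A morphism `e ∈ X_{1,0}` is `f`-cocartesian if the square
`(Δ² \ X)^e → (Λ²₀ \ X)^e` over `(Δ² \ Y)^{f(e)} → (Λ²₀ \ Y)^{f(e)}` is a homotopy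
pullback. -/
noncomputable def IsCocartesianEdge {X Y : BSSet} (f : X ⟶ Y)
    (e : X.obj (op ⦋1⦌, op ⦋0⦌)) : Prop :=
  IsCocartAlong (SSet.horn 2 0).ι (edgeHorn 2 (by omega)) f e

/-- Abbreviation for `op [k]`. -/
abbrev sc (k : ℕ) : SimplexCategoryᵒᵖ := op (SimplexCategory.mk k)

lemma fibFst_push {B : SSet.{0}} (ι : Δ[1] ⟶ B) {X Y : BSSet} (f : X ⟶ Y)
    (e : X.obj (op ⦋1⦌, op ⦋0⦌)) :
    fibFst ι X e ≫ underPush B f = fibPush ι f e ≫ fibFst ι Y (fApp f e) := rfl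

lemma fibFst_whisker {B B' : SSet.{0}} (u : B ⟶ B') (ι : Δ[1] ⟶ B) (X : BSSet)
    (e : X.obj (op ⦋1⦌, op ⦋0⦌)) :
    fibFst (ι ≫ u) X e ≫ underWhisker u X = fibRes u ι X e ≫ fibFst ι X e := rfl

/-- The forgetful map
`(B' \ Y)^{f(e)} ×_{(B \ Y)^{f(e)}} (B \ X)^e ⟶ B' \ Y ×_{B \ Y} B \ X`
(with the pullbacks written in the other order). -/
noncomputable def fibForget {B B' : SSet.{0}} (u : B ⟶ B') (ι : Δ[1] ⟶ B) {X Y : BSSet}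
    (f : X ⟶ Y) (e : X.obj (op ⦋1⦌, op ⦋0⦌)) :
    pullback (fibPush ι f e) (fibRes u ι Y (fApp f e)) ⟶
      pullback (underPush B f) (underWhisker u Y) :=
  pullback.lift
    (pullback.fst _ _ ≫ fibFst ι X e)
    (pullback.snd _ _ ≫ fibFst (ι ≫ u) Y (fApp f e))
    (by
      rw [Category.assoc, Category.assoc, fibFst_push, fibFst_whisker,
        ← Category.assoc, ← Category.assoc, pullback.condition])

/-- The left spine `Lₙ ⊆ Δⁿ`: the union of the edge `Δ^{0,1}` with the spine
`Δ^{0,2} ∪ Δ^{2,3} ∪ ⋯ ∪ Δ^{n-1,n}` of the face `d₁Δⁿ`. -/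
def leftSpine (n : ℕ) : SSet.{0} where
  obj m := { a : Δ[n].obj m //
    (∀ j, ((SSet.stdSimplex.asOrderHom a) j : ℕ) ≤ 1) ∨
    (∀ j, ((SSet.stdSimplex.asOrderHom a) j : ℕ) = 0 ∨ ((SSet.stdSimplex.asOrderHom a) j : ℕ) = 2) ∨
    (∃ i : ℕ, 2 ≤ i ∧
      ∀ j, ((SSet.stdSimplex.asOrderHom a) j : ℕ) = i ∨ ((SSet.stdSimplex.asOrderHom a) j : ℕ) = i + 1) }
  map {m m'} φ := ↾fun a => ⟨Δ[n].map φ a.1, by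
    rcases a.2 with h | h | ⟨i, h2, h⟩
    exacts [Or.inl fun j => h _, Or.inr (Or.inl fun j => h _),
      Or.inr (Or.inr ⟨i, h2, fun j => h _⟩)]⟩
  map_id m := by
    refine ConcreteCategory.hom_ext _ _ fun a => ?_
    apply Subtype.ext
    show Δ[n].map (𝟙 m) a.1 = a.1
    simp
  map_comp φ ψ := by
    refine ConcreteCategory.hom_ext _ _ fun a => ?_
    apply Subtype.ext
    show Δ[n].map (φ ≫ ψ) a.1 = Δ[n].map ψ (Δ[n].map φ a.1)
    simp

def leftSpineIncl (n : ℕ) : leftSpine n ⟶ Δ[n] where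
  app m := ↾fun a => a.1
  naturality m m' φ := rfl

/-- The edge `Δ^{0,1} ⟶ Lₙ`. -/
def edgeLeftSpine (n : ℕ) (h : 1 ≤ n) : Δ[1] ⟶ leftSpine n where
  app m := ↾fun a => ⟨(edge01 n h).app m a,
    Or.inl fun j => Nat.lt_succ_iff.mp ((SSet.stdSimplex.asOrderHom a) j).isLt⟩
  naturality m m' φ := by
    refine ConcreteCategory.hom_ext _ _ fun a => ?_
    apply Subtype.ext
    exact ConcreteCategory.congr_hom ((edge01 n h).naturality φ) a

lemma edgeLeftSpine_incl (n : ℕ) (h : 1 ≤ n) :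
    edgeLeftSpine n h ≫ leftSpineIncl n = edge01 n h := rfl

/-- The `m`-th column `X_m` of a bisimplicial set, as a simplicial set. -/
def col (X : BSSet) (m : SimplexCategory) : SSet.{0} where
  obj n := X.obj (op m, n)
  map {n n'} g := ↾fun x => X.map (𝟙 (op m), g) x
  map_id n := by
    refine ConcreteCategory.hom_ext _ _ fun x => ?_
    exact ConcreteCategory.congr_hom (X.map_id (op m, n)) x
  map_comp {n n' n''} g h := by
    refine ConcreteCategory.hom_ext _ _ fun x => ?_
    exact FunctorToTypes.map_comp_apply X
      ((𝟙 (op m), g) : (op m, n) ⟶ (op m, n'))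
      ((𝟙 (op m), h) : (op m, n') ⟶ (op m, n'')) x

/-- Horizontal face of an edge `e ∈ X_{1,0}`: `hface 1 e` is the source vertex and
`hface 0 e` the target vertex. -/
def hface {X : BSSet} (i : Fin 2) (e : X.obj (op ⦋1⦌, op ⦋0⦌)) : X.obj (op ⦋0⦌, op ⦋0⦌) :=
  X.map ((((SimplexCategory.δ i).op : sc 1 ⟶ sc 0), 𝟙 (sc 0)) :
    (sc 1, sc 0) ⟶ (sc 0, sc 0)) e

/-- The degenerate (identity) edge on a vertex `x ∈ X_{0,0}`. -/
def hdegen {X : BSSet} (x : X.obj (op ⦋0⦌, op ⦋0⦌)) : X.obj (op ⦋1⦌, op ⦋0⦌) :=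
  X.map ((((SimplexCategory.σ 0).op : sc 0 ⟶ sc 1), 𝟙 (sc 0)) :
    (sc 0, sc 0) ⟶ (sc 1, sc 0)) x

/-- Vertical face of `h ∈ X_{1,1}`: `vface 1 h` and `vface 0 h` are the two endpoints of the
path `h` in the space `X_1`. -/
def vface {X : BSSet} (i : Fin 2) (h : X.obj (op ⦋1⦌, op ⦋1⦌)) : X.obj (op ⦋1⦌, op ⦋0⦌) :=
  X.map ((𝟙 (sc 1), ((SimplexCategory.δ i).op : sc 1 ⟶ sc 0)) :
    (sc 1, sc 1) ⟶ (sc 1, sc 0)) h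

/-- Horizontal faces of a `2`-simplex `τ ∈ X_{2,0}`. -/
def hface2 {X : BSSet} (i : Fin 3) (τ : X.obj (op ⦋2⦌, op ⦋0⦌)) : X.obj (op ⦋1⦌, op ⦋0⦌) :=
  X.map ((((SimplexCategory.δ i).op : sc 2 ⟶ sc 1), 𝟙 (sc 0)) :
    (sc 2, sc 0) ⟶ (sc 1, sc 0)) τ

/-- Two edges are connected by a path in the space `X_1` . -/
def PathConn (X : BSSet) : X.obj (op ⦋1⦌, op ⦋0⦌) → X.obj (op ⦋1⦌, op ⦋0⦌) → Prop :=
  Relation.EqvGen (fun e e' => ∃ h : X.obj (op ⦋1⦌, op ⦋1⦌), vface 1 h = e ∧ vface 0 h = e')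

/-- A homotopy equivalence in a Segal space, in the sense of Rezk: an edge admitting a right
inverse and a left inverse up to homotopy. -/
def IsHomotopyEquivalenceEdge (X : BSSet) (e : X.obj (op ⦋1⦌, op ⦋0⦌)) : Prop :=
  (∃ (g : X.obj (op ⦋1⦌, op ⦋0⦌)) (τ : X.obj (op ⦋2⦌, op ⦋0⦌)),
    hface2 2 τ = g ∧ hface2 0 τ = e ∧ PathConn X (hface2 1 τ) (hdegen (hface 1 g))) ∧
  (∃ (g' : X.obj (op ⦋1⦌, op ⦋0⦌)) (τ' : X.obj (op ⦋2⦌, op ⦋0⦌)),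
    hface2 2 τ' = e ∧ hface2 0 τ' = g' ∧ PathConn X (hface2 1 τ') (hdegen (hface 1 e)))

/-- A cocartesian edge in the quasicategorical sense, for a map `π : C ⟶ D` of simplicial
sets: all left horns (for `n ≥ 2`) whose initial edge is `c`, together with a filler
downstairs, can be filled upstairs. -/
def QCocartesianEdge {C D : SSet.{0}} (π : C ⟶ D) (c : C.obj (op ⦋1⦌)) : Prop :=
  ∀ (n : ℕ) (hn : 2 ≤ n) (g : (Λ[n, 0] : SSet.{0}) ⟶ C) (d : Δ[n] ⟶ D),
    SSet.yonedaEquiv (edgeHorn n hn ≫ g) = c →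
    g ≫ π = (SSet.horn n 0).ι ≫ d →
    ∃ h : Δ[n] ⟶ C, (SSet.horn n 0).ι ≫ h = g ∧ h ≫ π = d

/-- A cocartesian fibration of quasicategories: an inner fibration such that every edge
downstairs with a lift of its source admits a cocartesian lift. -/
def IsQCocartesianFibration {C D : SSet.{0}} (π : C ⟶ D) : Prop :=
  IsInnerFibration π ∧
  ∀ (σ : D.obj (op ⦋1⦌)) (x : C.obj (op ⦋0⦌)),
    π.app (op ⦋0⦌) x = D.map (SimplexCategory.δ 1).op σ →
    ∃ c : C.obj (op ⦋1⦌), QCocartesianEdge π c ∧ π.app (op ⦋1⦌) c = σ ∧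
      C.map (SimplexCategory.δ 1).op c = x

/-- A cocartesian fibration between Segal spaces: a Reedy fibration such that every
morphism of `Y` with a lift of its source vertex admits an `f`-cocartesian lift. -/
noncomputable def IsCocartesianFibration {X Y : BSSet} (f : X ⟶ Y) : Prop :=
  IsReedyFibration f ∧
  ∀ (σ : Y.obj (op ⦋1⦌, op ⦋0⦌)) (x : X.obj (op ⦋0⦌, op ⦋0⦌)),
    f.app (op ⦋0⦌, op ⦋0⦌) x = hface 1 σ →
    ∃ e : X.obj (op ⦋1⦌, op ⦋0⦌), IsCocartesianEdge f e ∧ fApp f e = σ ∧ hface 1 e = x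

/-- The identity `m`-simplex of the standard simplex `Δ^m`. -/
def idSimplex (m : SimplexCategory) : (SSet.stdSimplex.{0}.obj m).obj (op m) :=
  (SSet.stdSimplex.objEquiv (n := m) (m := op m)).symm (𝟙 m)

/-- A marked simplicial set: a simplicial set together with a set of marked edges
containing all degenerate edges. -/
structure MSSet : Type 1 where
  carrier : SSet.{0}
  marked : Set (carrier.obj (op ⦋1⦌))
  degen_marked : ∀ x : carrier.obj (op ⦋0⦌),
    carrier.map ((SimplexCategory.σ 0).op : sc 0 ⟶ sc 1) x ∈ marked

instance : Category MSSet where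
  Hom A B := { g : A.carrier ⟶ B.carrier // ∀ a ∈ A.marked, g.app (op ⦋1⦌) a ∈ B.marked }
  id A := ⟨𝟙 A.carrier, fun _ ha => ha⟩
  comp f g := ⟨f.1 ≫ g.1, fun a ha => g.2 _ (f.2 a ha)⟩
  id_comp f := Subtype.ext (Category.id_comp _)
  comp_id f := Subtype.ext (Category.comp_id _)
  assoc f g h := Subtype.ext (Category.assoc _ _ _)

/-- A marked bisimplicial set: a bisimplicial set together with a set of marked edges in
`X_{1,0}` containing all degenerate edges. -/
structure MBSSet : Type 1 where
  carrier : BSSet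
  marked : Set (carrier.obj (op ⦋1⦌, op ⦋0⦌))
  degen_marked : ∀ x : carrier.obj (op ⦋0⦌, op ⦋0⦌), hdegen x ∈ marked

instance : Category MBSSet where
  Hom X Y := { g : X.carrier ⟶ Y.carrier //
    ∀ a ∈ X.marked, g.app (op ⦋1⦌, op ⦋0⦌) a ∈ Y.marked }
  id X := ⟨𝟙 X.carrier, fun _ ha => ha⟩
  comp f g := ⟨f.1 ≫ g.1, fun a ha => g.2 _ (f.2 a ha)⟩
  id_comp f := Subtype.ext (Category.id_comp _)
  comp_id f := Subtype.ext (Category.comp_id _)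
  assoc f g h := Subtype.ext (Category.assoc _ _ _)

/-- The marked box product `A □ B` of a marked simplicial set and a simplicial set:
an edge `(a, b) ∈ A₁ × B₀` is marked iff `a` is marked. -/
def mBoxObj (A : MSSet) (B : SSet.{0}) : MBSSet where
  carrier := boxObj A.carrier B
  marked := { z | z.1 ∈ A.marked }
  degen_marked x := A.degen_marked x.1

/-- The marked division `A \ X`: its `n`-simplices are the marked maps `A □ Δⁿ ⟶ X`. -/
def mUnder (A : MSSet) (X : MBSSet) : SSet.{0} where
  obj n := { σ : boxObj A.carrier (SSet.stdSimplex.obj n.unop) ⟶ X.carrier //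
      ∀ a ∈ A.marked, ∀ b, σ.app (op ⦋1⦌, op ⦋0⦌) (a, b) ∈ X.marked }
  map {n m} φ := ↾fun σ =>
    ⟨boxMap (𝟙 A.carrier) (SSet.stdSimplex.map φ.unop) ≫ σ.1,
      fun a ha b => σ.2 a ha _⟩
  map_id n := by
    refine ConcreteCategory.hom_ext _ _ fun σ => ?_
    apply Subtype.ext
    show boxMap (𝟙 A.carrier) (SSet.stdSimplex.map (𝟙 n.unop)) ≫ σ.1 = σ.1
    erw [CategoryTheory.Functor.map_id, boxMap_id, Category.id_comp]
  map_comp {n m k} φ ψ := by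
    refine ConcreteCategory.hom_ext _ _ fun σ => ?_
    apply Subtype.ext
    show boxMap (𝟙 A.carrier) (SSet.stdSimplex.map (ψ.unop ≫ φ.unop)) ≫ σ.1 = _
    erw [Functor.map_comp, boxMapR_comp, Category.assoc]
    rfl

/-- Restriction of marked divisions along a map of marked simplicial sets. -/
def mUnderWhisker {A A' : MSSet} (u : A ⟶ A') (X : MBSSet) :
    mUnder A' X ⟶ mUnder A X where
  app n := ↾fun σ => ⟨boxMap u.1 (𝟙 _) ≫ σ.1, fun a ha b => σ.2 _ (u.2 a ha) b⟩
  naturality n m φ := rfl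

/-- Pushforward of marked divisions along a map of marked bisimplicial sets. -/
def mUnderPush (A : MSSet) {X Y : MBSSet} (f : X ⟶ Y) :
    mUnder A X ⟶ mUnder A Y where
  app n := ↾fun σ => ⟨σ.1 ≫ f.1, fun a ha b => f.2 _ (σ.2 a ha b)⟩
  naturality n m φ := rfl

lemma mUnderSq {A A' : MSSet} (u : A ⟶ A') {X Y : MBSSet} (f : X ⟶ Y) :
    mUnderWhisker u X ≫ mUnderPush A f = mUnderPush A' f ≫ mUnderWhisker u Y := rfl

/-- The gap map `⟨u \ f⟩` for marked divisions. -/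
noncomputable def mUnderGap {A A' : MSSet} (u : A ⟶ A') {X Y : MBSSet} (f : X ⟶ Y) :
    mUnder A' X ⟶ pullback (mUnderPush A f) (mUnderWhisker u Y) :=
  pullback.lift (mUnderWhisker u X) (mUnderPush A' f) (mUnderSq u f)

/-- The marked slice `X / B`: underlying simplicial set `X̊ / B`, an edge being marked iff
it sends each pair `(id₁, b)` to a marked edge of `X`. -/
def mOver (X : MBSSet) (B : SSet.{0}) : MSSet where
  carrier := overBS X.carrier B
  marked := { σ : (overBS X.carrier B).obj (op ⦋1⦌)|
      ∀ b : B.obj (op ⦋0⦌), NatTrans.app σ (op ⦋1⦌, op ⦋0⦌) (idSimplex ⦋1⦌, b) ∈ X.marked }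
  degen_marked x := by
    intro b
    have h := ConcreteCategory.congr_hom
      (x.naturality ((((SimplexCategory.σ 0).op : sc 0 ⟶ sc 1), 𝟙 (sc 0)) :
        (sc 0, sc 0) ⟶ (sc 1, sc 0))) ((idSimplex ⦋0⦌, b) : _ × _)
    simp only [types_comp_apply, boxObj_map, FunctorToTypes.map_id_apply] at h
    exact Set.mem_of_eq_of_mem h (X.degen_marked _)

/-- Pushforward of marked slices. -/
def mOverPush (B : SSet.{0}) {X Y : MBSSet} (f : X ⟶ Y) :
    mOver X B ⟶ mOver Y B :=
  ⟨overPush B f.1, by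
    intro σ hσ b
    exact f.2 _ (hσ b)⟩

/-- The functor `A □ - : SSet ⥤ MBSSet` for a marked simplicial set `A`. -/
def mBoxLFunctor (A : MSSet) : SSet.{0} ⥤ MBSSet where
  obj B := mBoxObj A B
  map v := ⟨boxMap (𝟙 A.carrier) v, fun z hz => hz⟩
  map_id B := Subtype.ext rfl
  map_comp v w := Subtype.ext rfl

/-- The functor `A \ - : MBSSet ⥤ SSet` for a marked simplicial set `A`. -/
def mUnderFunctor (A : MSSet) : MBSSet ⥤ SSet.{0} where
  obj X := mUnder A X
  map f := mUnderPush A f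
  map_id X := by
    apply NatTrans.ext
    funext n
    refine ConcreteCategory.hom_ext _ _ fun σ => ?_
    exact Subtype.ext (Category.comp_id _)
  map_comp f g := rfl

/-- The functor `- □ B : MSSet ⥤ MBSSet` for a simplicial set `B`. -/
def mBoxRFunctor (B : SSet.{0}) : MSSet ⥤ MBSSet where
  obj A := mBoxObj A B
  map u := ⟨boxMap u.1 (𝟙 B), fun z hz => u.2 z.1 hz⟩
  map_id A := Subtype.ext rfl
  map_comp u v := Subtype.ext rfl

/-- The functor `- / B : MBSSet ⥤ MSSet` for a simplicial set `B`. -/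
def mOverFunctor (B : SSet.{0}) : MBSSet ⥤ MSSet where
  obj X := mOver X B
  map f := mOverPush B f
  map_id X := by
    apply Subtype.ext
    apply NatTrans.ext
    funext n
    refine ConcreteCategory.hom_ext _ _ fun σ => ?_
    exact Category.comp_id σ
  map_comp f g := rfl

/-- The vertex `v` of a simplex. -/
def vertexOf {S : SSet.{0}} {n : SimplexCategoryᵒᵖ} (σ : S.obj n)
    (v : Fin (n.unop.len + 1)) : S.obj (op ⦋0⦌) :=
  S.map (Quiver.Hom.op
    (SimplexCategory.Hom.mk (OrderHom.const _ v) : (⦋0⦌ : SimplexCategory) ⟶ n.unop)) σ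

/-- A full inclusion of simplicial sets: a levelwise injection such that any simplex all of
whose vertices lie in the image itself lies in the image. -/
def IsFullInclusion {S T : SSet.{0}} (j : S ⟶ T) : Prop :=
  (∀ n, Function.Injective (j.app n)) ∧
  ∀ (n : SimplexCategoryᵒᵖ) (σ : T.obj n),
    (∀ v : Fin (n.unop.len + 1), vertexOf σ v ∈ Set.range (j.app (op ⦋0⦌))) →
    σ ∈ Set.range (j.app n)

/-- The inclusion `A \ X ⟶ Å \ X̊` of the marked division into the unmarked one. -/
def mUnderIncl (A : MSSet) (X : MBSSet) : mUnder A X ⟶ under A.carrier X.carrier where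
  app n := ↾fun σ => σ.1
  naturality n m φ := rfl

/-- A marking on a marked bisimplicial set respects path components if for every edge
`e → e'` in the space `X₁`, `e` is marked iff `e'` is marked. -/
def MarkingRespectsPathComponents (X : MBSSet) : Prop :=
  ∀ h : X.carrier.obj (op ⦋1⦌, op ⦋1⦌), (vface 1 h ∈ X.marked ↔ vface 0 h ∈ X.marked)

/-- The `ℒ`-marking on a simplicial set `B` equipped with an edge `ι : Δ¹ ⟶ B`: the only
marked edges are the degenerate ones and (the image of) `ι`. -/
def mkL (B : SSet.{0}) (ι : Δ[1] ⟶ B) : MSSet where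
  carrier := B
  marked := Set.range (B.map ((SimplexCategory.σ 0).op : sc 0 ⟶ sc 1)) ∪
    {ι.app (op ⦋1⦌) (idSimplex ⦋1⦌)}
  degen_marked x := Or.inl ⟨x, rfl⟩

/-- A map between `ℒ`-marked simplicial sets preserving the distinguished edges. -/
def mkLHom {A B : SSet.{0}} (i : A ⟶ B) (ιA : Δ[1] ⟶ A) (ιB : Δ[1] ⟶ B)
    (h : ιA ≫ i = ιB) : mkL A ιA ⟶ mkL B ιB :=
  ⟨i, by
    rintro a (⟨x, rfl⟩ | ha)
    · exact Or.inl ⟨i.app _ x, (NatTrans.naturality_apply i _ x).symm⟩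
    · right
      erw [Set.mem_singleton_iff] at ha ⊢
      rw [ha, ← h]
      rfl⟩

lemma eConst_app {X : BSSet} (m : SimplexCategory) (e : X.obj (op ⦋1⦌, op ⦋0⦌))
    (b : (SSet.stdSimplex.{0}.obj m).obj (sc 0)) :
    (eConst m e).app (op ⦋1⦌, op ⦋0⦌) (idSimplex ⦋1⦌, b) = e := by
  show X.map ((SSet.stdSimplex.objEquiv (n := (⦋1⦌ : SimplexCategory)) (m := sc 1)
      (idSimplex ⦋1⦌)).op,
    (SSet.stdSimplex.objEquiv (n := (⦋0⦌ : SimplexCategory)) (m := sc 0)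
      ((SSet.stdSimplex.map (toZero m)).app (sc 0) b)).op) e = e
  rw [show SSet.stdSimplex.objEquiv (n := (⦋1⦌ : SimplexCategory)) (m := sc 1) (idSimplex ⦋1⦌)
      = 𝟙 (⦋1⦌ : SimplexCategory) from Equiv.apply_symm_apply _ _,
    toZero_unique (SSet.stdSimplex.objEquiv (n := (⦋0⦌ : SimplexCategory)) (m := sc 0)
      ((SSet.stdSimplex.map (toZero m)).app (sc 0) b)) (𝟙 (⦋0⦌ : SimplexCategory))]
  exact FunctorToTypes.map_id_apply X e

/-- The map from a fibered diagram space to the `ℒ`-marked division, well-defined when the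
fixed edge `e` is marked. -/
def fibToMarked {B : SSet.{0}} (ι : Δ[1] ⟶ B) (X : MBSSet)
    (e : X.carrier.obj (op ⦋1⦌, op ⦋0⦌)) (he : e ∈ X.marked) :
    fib ι X.carrier e ⟶ mUnder (mkL B ι) X where
  app n := ↾fun σ => ⟨σ.1, by
    rintro a (⟨x, rfl⟩ | ha) b
    · have h := ConcreteCategory.congr_hom
        (σ.1.naturality ((((SimplexCategory.σ 0).op : sc 0 ⟶ sc 1), 𝟙 (sc 0)) :
          (sc 0, sc 0) ⟶ (sc 1, sc 0))) ((x, b) : _ × _)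
      simp only [types_comp_apply, boxObj_map, FunctorToTypes.map_id_apply] at h
      exact Set.mem_of_eq_of_mem h (X.degen_marked _)
    · erw [Set.mem_singleton_iff] at ha
      subst ha
      have h := ConcreteCategory.congr_hom (congrArg (fun τ => NatTrans.app τ (sc 1, sc 0)) σ.2)
        ((idSimplex ⦋1⦌, b) : _ × _)
      rw [eConst_app] at h
      exact Set.mem_of_eq_of_mem h he⟩
  naturality n m φ := rfl


section Aux

open SSet

/-- Extensionality for simplices of the standard simplex. -/
lemma simplexExt {N : ℕ} {n : SimplexCategoryᵒᵖ} {a b : Δ[N].obj n}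
    (h : ∀ p, stdSimplex.asOrderHom a p = stdSimplex.asOrderHom b p) : a = b := by
  apply stdSimplex.objEquiv.injective
  apply SimplexCategory.Hom.ext
  apply OrderHom.ext
  funext p
  exact h p

lemma asOrderHom_map {N : ℕ} {n n' : SimplexCategoryᵒᵖ} (φ : n ⟶ n') (a : Δ[N].obj n) (p) :
    stdSimplex.asOrderHom (Δ[N].map φ a) p = stdSimplex.asOrderHom a (φ.unop.toOrderHom p) := rfl

lemma asOrderHom_objMk {N : ℕ} {n : SimplexCategoryᵒᵖ}
    (f : Fin (n.unop.len + 1) →o Fin (N + 1)) (p) :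
    stdSimplex.asOrderHom (stdSimplex.objMk f : Δ[N].obj n) p = f p := rfl

/-- Characterization of lifting problems against a gap map `pullback.lift`. -/
lemma gap_lift_iff {A B Z U V W : SSet.{0}} (i : A ⟶ B)
    (a : Z ⟶ U) (b : Z ⟶ V) (p : U ⟶ W) (q : V ⟶ W) (w : a ≫ p = b ≫ q) :
    HasLiftingProperty i (pullback.lift a b w) ↔
      ∀ (t : A ⟶ Z) (u : B ⟶ U) (v : B ⟶ V), u ≫ p = v ≫ q →
        t ≫ a = i ≫ u → t ≫ b = i ≫ v →
        ∃ l : B ⟶ Z, i ≫ l = t ∧ l ≫ a = u ∧ l ≫ b = v := by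
  constructor
  · intro H t u v huv h1 h2
    have sq : CommSq t i (pullback.lift a b w) (pullback.lift u v huv) := by
      constructor
      apply pullback.hom_ext
      · simp [h1, pullback.lift_fst, pullback.lift_snd, pullback.lift_fst_assoc, pullback.lift_snd_assoc]
      · simp [h2, pullback.lift_fst, pullback.lift_snd, pullback.lift_fst_assoc, pullback.lift_snd_assoc]
    obtain ⟨⟨l⟩⟩ := H.sq_hasLift sq
    refine ⟨l.l, l.fac_left, ?_, ?_⟩
    · have := l.fac_right
      calc l.l ≫ a = l.l ≫ pullback.lift a b w ≫ pullback.fst _ _ := by simp [pullback.lift_fst, pullback.lift_snd, pullback.lift_fst_assoc, pullback.lift_snd_assoc]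
        _ = u := by rw [← Category.assoc, this]; simp [pullback.lift_fst, pullback.lift_snd, pullback.lift_fst_assoc, pullback.lift_snd_assoc]
    · have := l.fac_right
      calc l.l ≫ b = l.l ≫ pullback.lift a b w ≫ pullback.snd _ _ := by simp [pullback.lift_fst, pullback.lift_snd, pullback.lift_fst_assoc, pullback.lift_snd_assoc]
        _ = v := by rw [← Category.assoc, this]; simp [pullback.lift_fst, pullback.lift_snd, pullback.lift_fst_assoc, pullback.lift_snd_assoc]
  · intro H
    constructor
    intro t bot sq
    obtain ⟨l, h0, h1, h2⟩ := H t (bot ≫ pullback.fst _ _) (bot ≫ pullback.snd _ _)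
      (by simp [pullback.condition, pullback.lift_fst, pullback.lift_snd, pullback.lift_fst_assoc, pullback.lift_snd_assoc])
      (by rw [← Category.assoc, ← sq.w]; simp [pullback.lift_fst, pullback.lift_snd, pullback.lift_fst_assoc, pullback.lift_snd_assoc])
      (by rw [← Category.assoc, ← sq.w]; simp [pullback.lift_fst, pullback.lift_snd, pullback.lift_fst_assoc, pullback.lift_snd_assoc])
    exact ⟨⟨⟨l, h0, by
      apply pullback.hom_ext <;> simp [h1, h2, pullback.lift_fst, pullback.lift_snd, pullback.lift_fst_assoc, pullback.lift_snd_assoc]⟩⟩⟩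

end Aux

section Cylinder

open SSet

/-- Pairing of maps into a cylinder. -/
@[simps]
def prodMk {K A : SSet.{0}} (s : K ⟶ A) (t : K ⟶ Δ[1]) : K ⟶ cyl A where
  app n := ↾fun k => (s.app n k, t.app n k)
  naturality n n' φ := by
    refine ConcreteCategory.hom_ext _ _ fun k => ?_
    show (_, _) = (A.map φ _, Δ[1].map φ _)
    exact Prod.ext (NatTrans.naturality_apply s φ k) (NatTrans.naturality_apply t φ k)

lemma asOrderHom_stdMap {a b : SimplexCategory} (θ : a ⟶ b) {n : SimplexCategoryᵒᵖ}
    (x : (SSet.stdSimplex.obj a).obj n) (p) :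
    (((SSet.stdSimplex.map θ).app n x).down.toOrderHom) p = θ.toOrderHom (x.down.toOrderHom p) :=
  rfl

lemma map_const {n n' : SimplexCategoryᵒᵖ} (φ : n ⟶ n') (k : Fin 2) :
    Δ[1].map φ (stdSimplex.const 1 k n) = stdSimplex.const 1 k n' := rfl

/-- The cylinder over the boundary of the standard simplex. -/
def bcyl (m : ℕ) : SSet.{0} where
  obj n := { z : (cyl Δ[m]).obj n // ¬ Function.Surjective (stdSimplex.asOrderHom z.1) }
  map {n n'} f := ↾fun z => ⟨(cyl Δ[m]).map f z.1, fun h => z.2 (Function.Surjective.of_comp h)⟩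
  map_id n := by
    refine ConcreteCategory.hom_ext _ _ fun z => ?_
    apply Subtype.ext
    exact ConcreteCategory.congr_hom ((cyl Δ[m]).map_id n) z.1
  map_comp f g := by
    refine ConcreteCategory.hom_ext _ _ fun z => ?_
    apply Subtype.ext
    exact ConcreteCategory.congr_hom ((cyl Δ[m]).map_comp f g) z.1

def bIncl (m : ℕ) : bcyl m ⟶ cyl Δ[m] where
  app n := ↾fun z => z.1
  naturality n n' φ := rfl

def bEnd (m : ℕ) (k : Fin 2) : (∂Δ[m] : SSet.{0}) ⟶ bcyl m where
  app n := ↾fun a => ⟨(a.1, stdSimplex.const 1 k n), a.2⟩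
  naturality n n' φ := by
    refine ConcreteCategory.hom_ext _ _ fun a => ?_
    apply Subtype.ext
    show ((Δ[m].map φ a.1, stdSimplex.const 1 k n')) = _
    show _ = (Δ[m].map φ a.1, Δ[1].map φ (stdSimplex.const 1 k n))
    rw [map_const]

lemma bEnd_bIncl (m : ℕ) (k : Fin 2) :
    bEnd m k ≫ bIncl m = (SSet.boundary m).ι ≫ cylIncl k Δ[m] := rfl

lemma pt_unique {n : SimplexCategoryᵒᵖ} (x y : Δ[0].obj n) : x = y := by
  apply simplexExt
  intro p
  apply Fin.ext
  have h1 := (stdSimplex.asOrderHom x p).isLt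
  have h2 := (stdSimplex.asOrderHom y p).isLt
  omega

/-- The unique map to the point. -/
def toPt (K : SSet.{0}) : K ⟶ Δ[0] where
  app n := ↾fun _ => stdSimplex.const 0 0 n
  naturality n n' φ := by
    refine ConcreteCategory.hom_ext _ _ fun k => ?_
    apply pt_unique

lemma toPt_comp {K K' : SSet.{0}} (w : K' ⟶ K) : w ≫ toPt K = toPt K' := rfl

/-- The vertex `k` of `Δ[m]` as a map from the point. -/
def vertexMap (m : ℕ) (k : Fin (m + 1)) : Δ[0] ⟶ Δ[m] :=
  SSet.stdSimplex.map (SimplexCategory.Hom.mk (OrderHom.const _ k))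

/-- The constant self-map of `Δ[m]` at the vertex `0`. -/
def constTo0 (m : ℕ) : Δ[m] ⟶ Δ[m] := toPt Δ[m] ≫ vertexMap m 0

lemma asOrderHom_constTo0 (m : ℕ) {n} (a : Δ[m].obj n) (p) :
    stdSimplex.asOrderHom ((constTo0 m).app n a) p = 0 := rfl

/-- The contraction homotopy `Δ[m] × Δ¹ → Δ[m]` from the constant map at `0` to the
identity. -/
def contr (m : ℕ) : cyl Δ[m] ⟶ Δ[m] where
  app n := ↾fun z => stdSimplex.objMk
    ⟨fun p => if stdSimplex.asOrderHom z.2 p = 0 then 0 else stdSimplex.asOrderHom z.1 p, by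
      intro p q hpq
      dsimp only []
      by_cases h1 : stdSimplex.asOrderHom z.2 p = 0
      · simp [h1]
      · have h2 : stdSimplex.asOrderHom z.2 q ≠ 0 := by
          intro h0
          apply h1
          have := (stdSimplex.asOrderHom z.2).monotone hpq
          rw [h0] at this
          exact le_antisymm this (Fin.zero_le _)
        simp only [h1, h2, if_false]
        exact (stdSimplex.asOrderHom z.1).monotone hpq⟩
  naturality n n' φ := by
    refine ConcreteCategory.hom_ext _ _ fun z => ?_
    apply simplexExt
    intro p
    rfl

lemma cylIncl_contr_one (m : ℕ) : cylIncl 1 Δ[m] ≫ contr m = 𝟙 Δ[m] := by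
  apply SSet.hom_ext
  intro n
  refine ConcreteCategory.hom_ext _ _ fun a => ?_
  apply simplexExt
  intro p
  have h : stdSimplex.asOrderHom ((cylIncl 1 Δ[m] ≫ contr m).app n a) p
      = if (1 : Fin 2) = 0 then 0 else stdSimplex.asOrderHom a p := rfl
  rw [h, if_neg (by decide)]
  rfl

lemma cylIncl_contr_zero (m : ℕ) : cylIncl 0 Δ[m] ≫ contr m = constTo0 m := by
  apply SSet.hom_ext
  intro n
  refine ConcreteCategory.hom_ext _ _ fun a => ?_
  apply simplexExt
  intro p
  have h : stdSimplex.asOrderHom ((cylIncl 0 Δ[m] ≫ contr m).app n a) p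
      = if (0 : Fin 2) = 0 then 0 else stdSimplex.asOrderHom a p := rfl
  rw [h, if_pos rfl]
  rfl

end Cylinder

section Prism

open SSet

lemma fin2_eq (x : Fin 2) : x = 0 ∨ x = 1 := by omega

/-- Constancy of the `Δ¹`-coordinate at `ε`. -/
def isConstE (ε : Fin 2) {n : SimplexCategoryᵒᵖ} (b : Δ[1].obj n) : Prop :=
  ∀ p, stdSimplex.asOrderHom b p = ε

lemma isConstE_elem {ε : Fin 2} {n : SimplexCategoryᵒᵖ} {b : Δ[1].obj n}
    (h : isConstE ε b) : b = stdSimplex.const 1 ε n := by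
  apply simplexExt
  intro p
  exact h p

/-- Membership in the chain of the `j`-th top simplex of `Δ[m] × Δ¹`. -/
def inChain (j : ℕ) {m : ℕ} {n : SimplexCategoryᵒᵖ} (z : (cyl Δ[m]).obj n) : Prop :=
  ∀ p, (stdSimplex.asOrderHom z.2 p = 0 → (stdSimplex.asOrderHom z.1 p : ℕ) ≤ j) ∧
    (stdSimplex.asOrderHom z.2 p = 1 → j ≤ (stdSimplex.asOrderHom z.1 p : ℕ))

/-- The set of chain indices already filled at stage `s` (starting from the end `ε`). -/
def DoneJ (m : ℕ) (ε : Fin 2) (s j : ℕ) : Prop :=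
  (ε = 0 ∧ m + 1 - s ≤ j) ∨ (ε = 1 ∧ j < s)

/-- Membership predicate for the intermediate subcomplexes of `Δ[m] × Δ¹`. -/
def JPred (m : ℕ) (ε : Fin 2) (s : ℕ) {n : SimplexCategoryᵒᵖ}
    (z : (cyl Δ[m]).obj n) : Prop :=
  (¬ Function.Surjective (stdSimplex.asOrderHom z.1)) ∨ isConstE ε z.2 ∨
    ∃ j, j ≤ m ∧ DoneJ m ε s j ∧ inChain j z

lemma JPred_map {m : ℕ} {ε : Fin 2} {s : ℕ} {n n' : SimplexCategoryᵒᵖ} (φ : n ⟶ n')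
    {z : (cyl Δ[m]).obj n} (h : JPred m ε s z) : JPred m ε s ((cyl Δ[m]).map φ z) := by
  rcases h with h | h | ⟨j, hj, hd, hc⟩
  · exact Or.inl (fun hs => h (Function.Surjective.of_comp hs))
  · exact Or.inr (Or.inl (fun p => h _))
  · exact Or.inr (Or.inr ⟨j, hj, hd, fun p => hc _⟩)

lemma JPred_mono {m : ℕ} {ε : Fin 2} {s s' : ℕ} (hss : s ≤ s') {n : SimplexCategoryᵒᵖ}
    {z : (cyl Δ[m]).obj n} (h : JPred m ε s z) : JPred m ε s' z := by
  rcases h with h | h | ⟨j, hj, hd, hc⟩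
  · exact Or.inl h
  · exact Or.inr (Or.inl h)
  · refine Or.inr (Or.inr ⟨j, hj, ?_, hc⟩)
    rcases hd with ⟨h0, hd⟩ | ⟨h1, hd⟩
    · exact Or.inl ⟨h0, by omega⟩
    · exact Or.inr ⟨h1, by omega⟩

/-- The intermediate subcomplexes of `Δ[m] × Δ¹`. -/
def Jset (m : ℕ) (ε : Fin 2) (s : ℕ) : SSet.{0} where
  obj n := { z : (cyl Δ[m]).obj n // JPred m ε s z }
  map {n n'} φ := ↾fun z => ⟨(cyl Δ[m]).map φ z.1, JPred_map φ z.2⟩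
  map_id n := by
    refine ConcreteCategory.hom_ext _ _ fun z => ?_
    apply Subtype.ext
    exact ConcreteCategory.congr_hom ((cyl Δ[m]).map_id n) z.1
  map_comp φ ψ := by
    refine ConcreteCategory.hom_ext _ _ fun z => ?_
    apply Subtype.ext
    exact ConcreteCategory.congr_hom ((cyl Δ[m]).map_comp φ ψ) z.1

def JIncl (m : ℕ) (ε : Fin 2) (s : ℕ) : Jset m ε s ⟶ cyl Δ[m] where
  app n := ↾fun z => z.1
  naturality n n' φ := rfl

/-- First coordinate of the `j`-th top simplex of `Δ[m] × Δ¹`. -/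
def sjf (m j : ℕ) (hj : j ≤ m) : Fin (m + 2) →o Fin (m + 1) where
  toFun x := if hx : (x : ℕ) ≤ j then ⟨x, by omega⟩ else ⟨(x : ℕ) - 1, by
    have := x.isLt; omega⟩
  monotone' := by
    intro a b hab
    have hab' : (a : ℕ) ≤ b := hab
    dsimp only
    split_ifs <;> simp only [Fin.mk_le_mk] <;> omega

/-- Second coordinate of the `j`-th top simplex of `Δ[m] × Δ¹`. -/
def sjs (j : ℕ) {m : ℕ} : Fin (m + 2) →o Fin 2 where
  toFun x := if (x : ℕ) ≤ j then 0 else 1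
  monotone' := by
    intro a b hab
    have hab' : (a : ℕ) ≤ b := hab
    dsimp only
    split_ifs <;> simp only [Fin.le_def] <;> omega

/-- The `j`-th top simplex of `Δ[m] × Δ¹` as a map `Δ[m+1] ⟶ Δ[m] × Δ¹`. -/
def sigmaMap (m j : ℕ) (hj : j ≤ m) : Δ[m+1] ⟶ cyl Δ[m] :=
  prodMk (SSet.stdSimplex.map (SimplexCategory.Hom.mk (sjf m j hj)))
    (SSet.stdSimplex.map (SimplexCategory.Hom.mk (sjs j)))

lemma sigma_fst {m j : ℕ} {hj : j ≤ m} {n : SimplexCategoryᵒᵖ} (γ : Δ[m+1].obj n) (p) :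
    stdSimplex.asOrderHom ((sigmaMap m j hj).app n γ).1 p = sjf m j hj (stdSimplex.asOrderHom γ p) := rfl

lemma sigma_snd {m j : ℕ} {hj : j ≤ m} {n : SimplexCategoryᵒᵖ} (γ : Δ[m+1].obj n) (p) :
    stdSimplex.asOrderHom ((sigmaMap m j hj).app n γ).2 p = sjs j (stdSimplex.asOrderHom γ p) := rfl

lemma sjf_val {m j : ℕ} (hj : j ≤ m) (x : Fin (m + 2)) :
    (sjf m j hj x : ℕ) = if (x : ℕ) ≤ j then (x : ℕ) else (x : ℕ) - 1 := by
  show ((if hx : (x : ℕ) ≤ j then _ else _ : Fin (m + 1)) : ℕ) = _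
  split_ifs <;> rfl

lemma sjs_val {m j : ℕ} (x : Fin (m + 2)) :
    ((sjs j (m := m) x) : ℕ) = if (x : ℕ) ≤ j then 0 else 1 := by
  show ((if (x : ℕ) ≤ j then _ else _ : Fin 2) : ℕ) = _
  split_ifs <;> rfl

/-- The simplex of `Δ[m+1]` corresponding to a simplex of `Δ[m] × Δ¹` lying in the `j`-th
chain. -/
def gammaOf (j : ℕ) {m : ℕ} {n : SimplexCategoryᵒᵖ} (z : (cyl Δ[m]).obj n) :
    Δ[m+1].obj n :=
  stdSimplex.objMk
    ⟨fun p => if stdSimplex.asOrderHom z.2 p = 0 then ⟨(stdSimplex.asOrderHom z.1 p : ℕ), by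
        have := (stdSimplex.asOrderHom z.1 p).isLt
        simp only [SimplexCategory.len_mk]; omega⟩
      else ⟨(stdSimplex.asOrderHom z.1 p : ℕ) + 1, by
        have := (stdSimplex.asOrderHom z.1 p).isLt
        simp only [SimplexCategory.len_mk]; omega⟩, by
      intro p q hpq
      have h1 := (stdSimplex.asOrderHom z.1).monotone hpq
      have h2 := (stdSimplex.asOrderHom z.2).monotone hpq
      have h1' : (stdSimplex.asOrderHom z.1 p : ℕ) ≤ (stdSimplex.asOrderHom z.1 q : ℕ) := h1
      dsimp only
      split_ifs with hp hq hq
      · simp only [Fin.mk_le_mk]; omega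
      · simp only [Fin.mk_le_mk]; omega
      · exfalso
        rw [hq] at h2
        have h2' : (stdSimplex.asOrderHom z.2 p : ℕ) ≤ 0 := h2
        have : stdSimplex.asOrderHom z.2 p = 0 := by
          apply Fin.ext
          simpa using h2'
        exact hp this
      · simp only [Fin.mk_le_mk]; omega⟩

lemma gammaOf_val {j m : ℕ} {n : SimplexCategoryᵒᵖ} (z : (cyl Δ[m]).obj n) (p) :
    (stdSimplex.asOrderHom (gammaOf j z) p : ℕ) =
      if stdSimplex.asOrderHom z.2 p = 0 then (stdSimplex.asOrderHom z.1 p : ℕ) else (stdSimplex.asOrderHom z.1 p : ℕ) + 1 := by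
  show ((if stdSimplex.asOrderHom z.2 p = 0 then _ else _ : Fin (m+2)) : ℕ) = _
  split_ifs <;> rfl

lemma gammaOf_map {j m : ℕ} {n n' : SimplexCategoryᵒᵖ} (φ : n ⟶ n')
    (z : (cyl Δ[m]).obj n) :
    gammaOf j ((cyl Δ[m]).map φ z) = Δ[m+1].map φ (gammaOf j z) := by
  apply simplexExt
  intro p
  rfl

lemma sigma_gammaOf {j m : ℕ} (hj : j ≤ m) {n : SimplexCategoryᵒᵖ}
    {z : (cyl Δ[m]).obj n} (hc : inChain j z) :
    (sigmaMap m j hj).app n (gammaOf j z) = z := by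
  have hfst : ((sigmaMap m j hj).app n (gammaOf j z)).1 = z.1 := by
    apply simplexExt
    intro p
    apply Fin.ext
    rw [sigma_fst, sjf_val, gammaOf_val]
    rcases fin2_eq (stdSimplex.asOrderHom z.2 p) with h0 | h1
    · have := (hc p).1 h0
      rw [if_pos h0, if_pos this]
    · have := (hc p).2 h1
      have h0 : ¬ stdSimplex.asOrderHom z.2 p = 0 := by rw [h1]; decide
      rw [if_neg h0, if_neg (by omega)]
      omega
  have hsnd : ((sigmaMap m j hj).app n (gammaOf j z)).2 = z.2 := by
    apply simplexExt
    intro p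
    apply Fin.ext
    rw [sigma_snd, sjs_val, gammaOf_val]
    rcases fin2_eq (stdSimplex.asOrderHom z.2 p) with h0 | h1
    · have := (hc p).1 h0
      rw [if_pos h0, if_pos this, h0]
      rfl
    · have := (hc p).2 h1
      have h0 : ¬ stdSimplex.asOrderHom z.2 p = 0 := by rw [h1]; decide
      rw [if_neg h0, if_neg (by omega), h1]
      rfl
  exact Prod.ext hfst hsnd

/-- Every simplex of `Δ[m] × Δ¹` lies in some chain. -/
lemma exists_chain {m : ℕ} {n : SimplexCategoryᵒᵖ} (z : (cyl Δ[m]).obj n) :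
    ∃ j, j ≤ m ∧ inChain j z := by
  classical
  set s := Finset.univ.filter (fun p => stdSimplex.asOrderHom z.2 p = 0) with hs
  by_cases hne : s.Nonempty
  · refine ⟨s.sup (fun p => (stdSimplex.asOrderHom z.1 p : ℕ)), ?_, ?_⟩
    · apply Finset.sup_le
      intro q _
      have := (stdSimplex.asOrderHom z.1 q).isLt
      omega
    · intro p
      constructor
      · intro h0
        apply Finset.le_sup (f := fun p => (stdSimplex.asOrderHom z.1 p : ℕ))
        simp [hs, h0]
      · intro h1
        apply Finset.sup_le
        intro q hq
        have hq0 : stdSimplex.asOrderHom z.2 q = 0 := by simpa [hs] using hq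
        rcases le_total p q with hpq | hqp
        · exfalso
          have := (stdSimplex.asOrderHom z.2).monotone hpq
          rw [h1, hq0] at this
          exact absurd this (by decide)
        · exact (stdSimplex.asOrderHom z.1).monotone hqp
  · refine ⟨0, Nat.zero_le m, ?_⟩
    intro p
    constructor
    · intro h0
      exfalso
      exact hne ⟨p, by simp [hs, h0]⟩
    · intro _
      exact Nat.zero_le _

end Prism

section PrismLift

open SSet

lemma horn_exists_missing {N : ℕ} {h : Fin (N+1)} {n} (γ : (Λ[N, h] : SSet.{0}).obj n) :
    ∃ v : Fin (N+1), (∀ p, stdSimplex.asOrderHom γ.1 p ≠ v) ∧ v ≠ h := by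
  have h2 := γ.2
  rw [mem_horn_iff, Set.ne_univ_iff_exists_notMem] at h2
  obtain ⟨v, hv⟩ := h2
  simp only [Set.mem_union, Set.mem_range, Set.mem_singleton_iff, not_or, not_exists] at hv
  exact ⟨v, fun p hp => hv.1 p hp, hv.2⟩

lemma horn_mem {N : ℕ} {h : Fin (N+1)} {n} (γ : Δ[N].obj n) (v : Fin (N+1))
    (hv : ∀ p, stdSimplex.asOrderHom γ p ≠ v) (hvh : v ≠ h) :
    Set.range (stdSimplex.asOrderHom γ) ∪ {h} ≠ Set.univ := by
  intro hEq
  have hmem : v ∈ Set.range (stdSimplex.asOrderHom γ) ∪ {h} := hEq ▸ Set.mem_univ v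
  rcases hmem with ⟨p, hp⟩ | hsing
  · exact hv p hp
  · exact hvh hsing

lemma sigma_fst_val {m j : ℕ} {hj : j ≤ m} {n} (γ : Δ[m+1].obj n) (p) :
    (stdSimplex.asOrderHom ((sigmaMap m j hj).app n γ).1 p : ℕ) =
      if (stdSimplex.asOrderHom γ p : ℕ) ≤ j then (stdSimplex.asOrderHom γ p : ℕ) else (stdSimplex.asOrderHom γ p : ℕ) - 1 := by
  rw [sigma_fst, sjf_val]

lemma sigma_snd_val {m j : ℕ} {hj : j ≤ m} {n} (γ : Δ[m+1].obj n) (p) :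
    (stdSimplex.asOrderHom ((sigmaMap m j hj).app n γ).2 p : ℕ) =
      if (stdSimplex.asOrderHom γ p : ℕ) ≤ j then 0 else 1 := by
  rw [sigma_snd, sjs_val]

lemma inChain_map {j m : ℕ} {n n' : SimplexCategoryᵒᵖ} (φ : n ⟶ n')
    {z : (cyl Δ[m]).obj n} (h : inChain j z) : inChain j ((cyl Δ[m]).map φ z) :=
  fun p => h (φ.unop.toOrderHom p)

/-- C1: composing a horn simplex with `σ_{j₀}` lands in the current subcomplex. -/
lemma sigma_horn_mem {m : ℕ} {ε : Fin 2} {s j0 : ℕ} (hj0 : j0 ≤ m)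
    (hdlt : ε = 1 → ∀ j, j < j0 → DoneJ m ε s j)
    (hdgt : ε = 0 → ∀ j, j0 < j → DoneJ m ε s j)
    {n} (γ : Δ[m+1].obj n) (v : Fin (m+2))
    (hv : ∀ p, stdSimplex.asOrderHom γ p ≠ v) (hvh : (v : ℕ) ≠ j0 + (ε : ℕ)) :
    JPred m ε s ((sigmaMap m j0 hj0).app n γ) := by
  have hvlt := v.isLt
  have hvnat : ∀ p, (stdSimplex.asOrderHom γ p : ℕ) ≠ (v : ℕ) := fun p hh => hv p (Fin.ext hh)
  by_cases h1 : (v : ℕ) < j0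
  · left
    intro hs
    obtain ⟨p, hp⟩ := hs ⟨(v : ℕ), by omega⟩
    have hval : (stdSimplex.asOrderHom ((sigmaMap m j0 hj0).app n γ).1 p : ℕ) = (v : ℕ) :=
      congrArg Fin.val hp
    rw [sigma_fst_val] at hval
    have := hvnat p
    by_cases hle : (stdSimplex.asOrderHom γ p : ℕ) ≤ j0
    · rw [if_pos hle] at hval; exact this hval
    · rw [if_neg hle] at hval; omega
  by_cases h2 : (v : ℕ) = j0
  · have hε : ε = 1 := by
      rcases fin2_eq ε with h | h
      · exfalso; apply hvh; rw [h]; simpa using h2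
      · exact h
    by_cases hj00 : j0 = 0
    · right; left
      intro p
      apply Fin.ext
      rw [hε]
      show _ = 1
      rw [sigma_snd_val, if_neg (by have := hvnat p; omega)]
    · right; right
      refine ⟨j0 - 1, by omega, hdlt hε _ (by omega), ?_⟩
      intro p
      have hvp := hvnat p
      constructor
      · intro h0
        have h0' : (stdSimplex.asOrderHom ((sigmaMap m j0 hj0).app n γ).2 p : ℕ) = 0 :=
          congrArg Fin.val h0
        rw [sigma_snd_val] at h0'
        by_cases hle : (stdSimplex.asOrderHom γ p : ℕ) ≤ j0
        · rw [sigma_fst_val, if_pos hle]; omega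
        · rw [if_neg hle] at h0'; omega
      · intro h0
        have h0' : (stdSimplex.asOrderHom ((sigmaMap m j0 hj0).app n γ).2 p : ℕ) = 1 :=
          congrArg Fin.val h0
        rw [sigma_snd_val] at h0'
        by_cases hle : (stdSimplex.asOrderHom γ p : ℕ) ≤ j0
        · rw [if_pos hle] at h0'; omega
        · rw [sigma_fst_val, if_neg hle]; omega
  by_cases h3 : (v : ℕ) = j0 + 1
  · have hε : ε = 0 := by
      rcases fin2_eq ε with h | h
      · exact h
      · exfalso; apply hvh; rw [h]; simpa using h3
    by_cases hj0m : j0 = m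
    · right; left
      intro p
      apply Fin.ext
      rw [hε]
      show _ = 0
      have hple := (stdSimplex.asOrderHom γ p).isLt
      rw [sigma_snd_val, if_pos (by have := hvnat p; omega)]
    · right; right
      refine ⟨j0 + 1, by omega, hdgt hε _ (by omega), ?_⟩
      intro p
      have hvp := hvnat p
      constructor
      · intro h0
        have h0' : (stdSimplex.asOrderHom ((sigmaMap m j0 hj0).app n γ).2 p : ℕ) = 0 :=
          congrArg Fin.val h0
        rw [sigma_snd_val] at h0'
        by_cases hle : (stdSimplex.asOrderHom γ p : ℕ) ≤ j0
        · rw [sigma_fst_val, if_pos hle]; omega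
        · rw [if_neg hle] at h0'; omega
      · intro h0
        have h0' : (stdSimplex.asOrderHom ((sigmaMap m j0 hj0).app n γ).2 p : ℕ) = 1 :=
          congrArg Fin.val h0
        rw [sigma_snd_val] at h0'
        by_cases hle : (stdSimplex.asOrderHom γ p : ℕ) ≤ j0
        · rw [if_pos hle] at h0'; omega
        · rw [sigma_fst_val, if_neg hle]; omega
  · -- (v : ℕ) > j0 + 1
    have h4 : j0 + 1 < (v : ℕ) := by omega
    left
    intro hs
    obtain ⟨p, hp⟩ := hs ⟨(v : ℕ) - 1, by omega⟩
    have hval : (stdSimplex.asOrderHom ((sigmaMap m j0 hj0).app n γ).1 p : ℕ) = (v : ℕ) - 1 :=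
      congrArg Fin.val hp
    rw [sigma_fst_val] at hval
    have := hvnat p
    by_cases hle : (stdSimplex.asOrderHom γ p : ℕ) ≤ j0
    · rw [if_pos hle] at hval; omega
    · rw [if_neg hle] at hval; omega

/-- C2: a simplex of `Δ[m+1]` whose image under `σ_{j₀}` lies in the current subcomplex
is a horn simplex. -/
lemma sigma_overlap_horn {m : ℕ} {ε : Fin 2} {s j0 : ℕ} (hj0 : j0 ≤ m)
    (hdcur : ∀ j, j ≤ m → DoneJ m ε s j → (ε = 0 → j0 < j) ∧ (ε = 1 → j < j0))
    {n} (γ : Δ[m+1].obj n) (hmem : JPred m ε s ((sigmaMap m j0 hj0).app n γ)) :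
    ∃ v : Fin (m+2), (∀ p, stdSimplex.asOrderHom γ p ≠ v) ∧ (v : ℕ) ≠ j0 + (ε : ℕ) := by
  have hεlt := ε.isLt
  rcases hmem with hns | hcs | ⟨j, hj, hd, hc⟩
  · rw [Function.Surjective] at hns
    push_neg at hns
    obtain ⟨w, hw⟩ := hns
    have hwlt := w.isLt
    have hwv : ∀ p, (stdSimplex.asOrderHom ((sigmaMap m j0 hj0).app n γ).1 p : ℕ) ≠ (w : ℕ) :=
      fun p hh => hw p (Fin.ext hh)
    by_cases hwj : (w : ℕ) < j0
    · refine ⟨⟨(w : ℕ), by omega⟩, ?_, by simp; omega⟩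
      intro p hp
      have hp' : (stdSimplex.asOrderHom γ p : ℕ) = (w : ℕ) := congrArg Fin.val hp
      have := hwv p
      rw [sigma_fst_val, if_pos (by omega)] at this
      exact this hp'
    by_cases hwj2 : (w : ℕ) = j0
    · rcases fin2_eq ε with hε | hε
      · -- horn index j0; use v = j0 + 1
        refine ⟨⟨j0 + 1, by omega⟩, ?_, by rw [hε]; simp⟩
        intro p hp
        have hp' : (stdSimplex.asOrderHom γ p : ℕ) = j0 + 1 := congrArg Fin.val hp
        have := hwv p
        rw [sigma_fst_val, if_neg (by omega)] at this
        omega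
      · -- horn index j0 + 1; use v = j0
        refine ⟨⟨j0, by omega⟩, ?_, by rw [hε]; simp⟩
        intro p hp
        have hp' : (stdSimplex.asOrderHom γ p : ℕ) = j0 := congrArg Fin.val hp
        have := hwv p
        rw [sigma_fst_val, if_pos (by omega)] at this
        omega
    · -- (w : ℕ) > j0
      refine ⟨⟨(w : ℕ) + 1, by omega⟩, ?_, by simp; omega⟩
      intro p hp
      have hp' : (stdSimplex.asOrderHom γ p : ℕ) = (w : ℕ) + 1 := congrArg Fin.val hp
      have := hwv p
      rw [sigma_fst_val, if_neg (by omega)] at this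
      omega
  · rcases fin2_eq ε with hε | hε
    · -- all snd values 0 : every γ p ≤ j0, so m+1 is missing
      refine ⟨⟨m + 1, by omega⟩, ?_, by rw [hε]; simp; omega⟩
      intro p hp
      have hp' : (stdSimplex.asOrderHom γ p : ℕ) = m + 1 := congrArg Fin.val hp
      have := congrArg Fin.val (hcs p)
      rw [hε] at this
      have h0 : (stdSimplex.asOrderHom ((sigmaMap m j0 hj0).app n γ).2 p : ℕ) = 0 := this
      rw [sigma_snd_val] at h0
      by_cases hle : (stdSimplex.asOrderHom γ p : ℕ) ≤ j0
      · omega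
      · rw [if_neg hle] at h0; omega
    · -- all snd values 1 : every γ p > j0, so 0 is missing
      refine ⟨⟨0, by omega⟩, ?_, by rw [hε]; simp⟩
      intro p hp
      have hp' : (stdSimplex.asOrderHom γ p : ℕ) = 0 := congrArg Fin.val hp
      have := congrArg Fin.val (hcs p)
      rw [hε] at this
      have h0 : (stdSimplex.asOrderHom ((sigmaMap m j0 hj0).app n γ).2 p : ℕ) = 1 := this
      rw [sigma_snd_val] at h0
      by_cases hle : (stdSimplex.asOrderHom γ p : ℕ) ≤ j0
      · rw [if_pos hle] at h0; omega
      · omega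
  · rcases fin2_eq ε with hε | hε
    · -- j0 < j; γ misses j0 + 1
      have hlt := ((hdcur j hj hd).1 hε)
      refine ⟨⟨j0 + 1, by omega⟩, ?_, by rw [hε]; simp⟩
      intro p hp
      have hp' : (stdSimplex.asOrderHom γ p : ℕ) = j0 + 1 := congrArg Fin.val hp
      have hc1 := (hc p).2
      have hs1 : stdSimplex.asOrderHom ((sigmaMap m j0 hj0).app n γ).2 p = 1 := by
        apply Fin.ext
        show _ = 1
        rw [sigma_snd_val, if_neg (by omega)]
      have := hc1 hs1
      rw [sigma_fst_val, if_neg (by omega)] at this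
      omega
    · -- j < j0; γ misses j0
      have hlt := ((hdcur j hj hd).2 hε)
      refine ⟨⟨j0, by omega⟩, ?_, by rw [hε]; simp⟩
      intro p hp
      have hp' : (stdSimplex.asOrderHom γ p : ℕ) = j0 := congrArg Fin.val hp
      have hc1 := (hc p).1
      have hs1 : stdSimplex.asOrderHom ((sigmaMap m j0 hj0).app n γ).2 p = 0 := by
        apply Fin.ext
        show _ = 0
        rw [sigma_snd_val, if_pos (by omega)]
      have := hc1 hs1
      rw [sigma_fst_val, if_pos (by omega)] at this
      omega

end PrismLift

section PrismLift2

open SSet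

lemma doneJ_zero {m s j : ℕ} : DoneJ m 0 s j ↔ m + 1 - s ≤ j := by
  unfold DoneJ
  simp [show ¬ (0 : Fin 2) = 1 by decide]

lemma doneJ_one {m s j : ℕ} : DoneJ m 1 s j ↔ j < s := by
  unfold DoneJ
  simp [show ¬ (1 : Fin 2) = 0 by decide]

/-- The extension step along one top simplex of `Δ[m] × Δ¹`. -/
lemma Jstep {Z W : SSet.{0}} (g : Z ⟶ W) (hg : IsKanFibration g) {m : ℕ} {ε : Fin 2}
    {s j0 : ℕ} (hj0 : j0 ≤ m)
    (hdnew : ∀ j, j ≤ m → (DoneJ m ε (s+1) j ↔ DoneJ m ε s j ∨ j = j0))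
    (hdcur : ∀ j, j ≤ m → DoneJ m ε s j → (ε = 0 → j0 < j) ∧ (ε = 1 → j < j0))
    (hdlt : ε = 1 → ∀ j, j < j0 → DoneJ m ε s j)
    (hdgt : ε = 0 → ∀ j, j0 < j → DoneJ m ε s j)
    (H : cyl Δ[m] ⟶ W) (G : Jset m ε s ⟶ Z) (hG : G ≫ g = JIncl m ε s ≫ H) :
    ∃ G' : Jset m ε (s+1) ⟶ Z, G' ≫ g = JIncl m ε (s+1) ≫ H ∧
      ∀ n (z : (cyl Δ[m]).obj n) (h : JPred m ε s z) (h' : JPred m ε (s+1) z),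
        G'.app n ⟨z, h'⟩ = G.app n ⟨z, h⟩ := by
  classical
  have hεlt := ε.isLt
  set hidx : Fin (m+2) := ⟨j0 + (ε : ℕ), by omega⟩ with hhidx
  -- the horn map
  have hmemσ : ∀ {n} (γ : (Λ[m+1, hidx] : SSet.{0}).obj n),
      JPred m ε s ((sigmaMap m j0 hj0).app n γ.1) := by
    intro n γ
    obtain ⟨v, hv1, hv2⟩ := horn_exists_missing γ
    exact sigma_horn_mem hj0 hdlt hdgt γ.1 v hv1 (fun hh => hv2 (Fin.ext hh))
  let κ : (Λ[m+1, hidx] : SSet.{0}) ⟶ Z := {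
    app := fun n => ↾fun γ => G.app n ⟨(sigmaMap m j0 hj0).app n γ.1, hmemσ γ⟩
    naturality := by
      intro n n' φ
      refine ConcreteCategory.hom_ext _ _ fun γ => ?_
      have h1 := FunctorToTypes.naturality G φ
        (⟨(sigmaMap m j0 hj0).app n γ.1, hmemσ γ⟩ : (Jset m ε s).obj n)
      have hsub : (⟨(sigmaMap m j0 hj0).app n' (Δ[m+1].map φ γ.1),
            hmemσ ((Λ[m+1, hidx] : SSet.{0}).map φ γ)⟩ : (Jset m ε s).obj n')
          = ⟨(cyl Δ[m]).map φ ((sigmaMap m j0 hj0).app n γ.1), JPred_map φ (hmemσ γ)⟩ :=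
        Subtype.ext (FunctorToTypes.naturality (sigmaMap m j0 hj0) φ γ.1)
      exact Eq.trans (congrArg (G.app n') hsub) h1 }
  have hsq : κ ≫ g = (SSet.horn (m+1) hidx).ι ≫ (sigmaMap m j0 hj0 ≫ H) := by
    apply SSet.hom_ext
    intro n
    refine ConcreteCategory.hom_ext _ _ fun γ => ?_
    exact ConcreteCategory.congr_hom (NatTrans.congr_app hG n)
      (⟨(sigmaMap m j0 hj0).app n γ.1, hmemσ γ⟩ : (Jset m ε s).obj n)
  haveI := hg m hidx
  have sq : CommSq κ ((SSet.horn (m+1) hidx).ι) g (sigmaMap m j0 hj0 ≫ H) := ⟨hsq⟩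
  -- key: lift applied to simplices whose σ-image is already present
  have hGL : ∀ (n : SimplexCategoryᵒᵖ) (γ : Δ[m+1].obj n)
      (hmem : JPred m ε s ((sigmaMap m j0 hj0).app n γ)),
      sq.lift.app n γ = G.app n ⟨(sigmaMap m j0 hj0).app n γ, hmem⟩ := by
    intro n γ hmem
    obtain ⟨v, hv1, hv2⟩ := sigma_overlap_horn hj0 hdcur γ hmem
    have hγ : Set.range (stdSimplex.asOrderHom γ) ∪ {hidx} ≠ Set.univ :=
      horn_mem γ v hv1 (fun hh => hv2 (congrArg Fin.val hh))
    have hfl := ConcreteCategory.congr_hom (NatTrans.congr_app sq.fac_left n)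
      (⟨γ, hγ⟩ : (Λ[m+1, hidx] : SSet.{0}).obj n)
    exact hfl
  -- membership of new simplices in the chain
  have hchain : ∀ {n} (z : (cyl Δ[m]).obj n), JPred m ε (s+1) z → ¬ JPred m ε s z →
      inChain j0 z := by
    intro n z hz hz'
    rcases hz with h | h | ⟨j, hj, hd, hc⟩
    · exact absurd (Or.inl h) hz'
    · exact absurd (Or.inr (Or.inl h)) hz'
    · rcases (hdnew j hj).mp hd with hd' | rfl
      · exact absurd (Or.inr (Or.inr ⟨j, hj, hd', hc⟩)) hz'
      · exact hc
  refine ⟨{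
    app := fun n => ↾fun z => if hz : JPred m ε s z.1 then G.app n ⟨z.1, hz⟩
      else sq.lift.app n (gammaOf j0 z.1)
    naturality := ?_ }, ?_, ?_⟩
  · intro n n' φ
    refine ConcreteCategory.hom_ext _ _ fun z => ?_
    show (if hz : JPred m ε s ((cyl Δ[m]).map φ z.1)
        then G.app n' ⟨(cyl Δ[m]).map φ z.1, hz⟩
        else sq.lift.app n' (gammaOf j0 ((cyl Δ[m]).map φ z.1)))
      = Z.map φ (if hz : JPred m ε s z.1 then G.app n ⟨z.1, hz⟩
        else sq.lift.app n (gammaOf j0 z.1))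
    by_cases hz : JPred m ε s z.1
    · rw [dif_pos hz, dif_pos (JPred_map φ hz)]
      exact (FunctorToTypes.naturality G φ ⟨z.1, hz⟩)
    · have hc1 : inChain j0 z.1 := hchain z.1 z.2 hz
      have hc2 : inChain j0 ((cyl Δ[m]).map φ z.1) := inChain_map φ hc1
      have hσ2 : (sigmaMap m j0 hj0).app n' (gammaOf j0 ((cyl Δ[m]).map φ z.1))
          = (cyl Δ[m]).map φ z.1 := sigma_gammaOf hj0 hc2
      have hLnat : Z.map φ (sq.lift.app n (gammaOf j0 z.1))
          = sq.lift.app n' (gammaOf j0 ((cyl Δ[m]).map φ z.1)) := by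
        rw [gammaOf_map]
        exact (FunctorToTypes.naturality sq.lift φ _).symm
      by_cases hz2 : JPred m ε s ((cyl Δ[m]).map φ z.1)
      · rw [dif_pos hz2, dif_neg hz, hLnat]
        have hmem2 : JPred m ε s
            ((sigmaMap m j0 hj0).app n' (gammaOf j0 ((cyl Δ[m]).map φ z.1))) := by
          rw [hσ2]; exact hz2
        rw [hGL n' _ hmem2]
        exact (congrArg (G.app n') (Subtype.ext hσ2)).symm
      · rw [dif_neg hz2, dif_neg hz, hLnat]
  · apply SSet.hom_ext
    intro n
    refine ConcreteCategory.hom_ext _ _ fun z => ?_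
    show g.app n (if hz : JPred m ε s z.1 then G.app n ⟨z.1, hz⟩
      else sq.lift.app n (gammaOf j0 z.1)) = H.app n z.1
    by_cases hz : JPred m ε s z.1
    · rw [dif_pos hz]
      exact ConcreteCategory.congr_hom (NatTrans.congr_app hG n) ⟨z.1, hz⟩
    · rw [dif_neg hz]
      have hc1 : inChain j0 z.1 := hchain z.1 z.2 hz
      have h1 := ConcreteCategory.congr_hom (NatTrans.congr_app sq.fac_right n) (gammaOf j0 z.1)
      have h2 : H.app n ((sigmaMap m j0 hj0).app n (gammaOf j0 z.1)) = H.app n z.1 :=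
        congrArg (H.app n) (sigma_gammaOf hj0 hc1)
      exact Eq.trans h1 h2
  · intro n z h h'
    exact dif_pos h

/-- The bottom map on the starting subcomplex. -/
lemma Jzero {Z W : SSet.{0}} {m : ℕ} {ε : Fin 2} (g : Z ⟶ W)
    (T : Δ[m] ⟶ Z) (UB : bcyl m ⟶ Z) (H : cyl Δ[m] ⟶ W)
    (hT : T ≫ g = cylIncl ε Δ[m] ≫ H) (hUB : UB ≫ g = bIncl m ≫ H)
    (hTU : bEnd m ε ≫ UB = (SSet.boundary m).ι ≫ T) :
    ∃ G : Jset m ε 0 ⟶ Z, G ≫ g = JIncl m ε 0 ≫ H ∧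
      (∀ n (z : (cyl Δ[m]).obj n) (hns : ¬ Function.Surjective (stdSimplex.asOrderHom z.1))
        (hm : JPred m ε 0 z), G.app n ⟨z, hm⟩ = UB.app n ⟨z, hns⟩) ∧
      (∀ n (a : Δ[m].obj n) (hm : JPred m ε 0 ((a, stdSimplex.const 1 ε n))),
        G.app n ⟨(a, stdSimplex.const 1 ε n), hm⟩ = T.app n a) := by
  classical
  have hJ0 : ∀ {n} (z : (cyl Δ[m]).obj n), JPred m ε 0 z →
      (¬ Function.Surjective (stdSimplex.asOrderHom z.1)) ∨ isConstE ε z.2 := by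
    rintro n z (h | h | ⟨j, hj, hd, _⟩)
    · exact Or.inl h
    · exact Or.inr h
    · rcases hd with ⟨_, hd⟩ | ⟨_, hd⟩ <;> omega
  -- value of UB at a simplex with constant second coordinate
  have hUBT : ∀ (n : SimplexCategoryᵒᵖ) (a : Δ[m].obj n)
      (hns : ¬ Function.Surjective (stdSimplex.asOrderHom a)),
      UB.app n ⟨(a, stdSimplex.const 1 ε n), hns⟩ = T.app n a := by
    intro n a hns
    exact ConcreteCategory.congr_hom (NatTrans.congr_app hTU n) (⟨a, hns⟩ : (∂Δ[m] : SSet.{0}).obj n)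
  refine ⟨{
    app := fun n => ↾fun z => if h : ¬ Function.Surjective (stdSimplex.asOrderHom z.1.1)
      then UB.app n ⟨z.1, h⟩ else T.app n z.1.1
    naturality := ?_ }, ?_, ?_, ?_⟩
  · intro n n' φ
    refine ConcreteCategory.hom_ext _ _ fun z => ?_
    show (if h : ¬ Function.Surjective (stdSimplex.asOrderHom ((cyl Δ[m]).map φ z.1).1)
        then UB.app n' ⟨(cyl Δ[m]).map φ z.1, h⟩ else T.app n' ((cyl Δ[m]).map φ z.1).1)
      = Z.map φ (if h : ¬ Function.Surjective (stdSimplex.asOrderHom z.1.1)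
        then UB.app n ⟨z.1, h⟩ else T.app n z.1.1)
    by_cases hp : ¬ Function.Surjective (stdSimplex.asOrderHom z.1.1)
    · have hc : ¬ Function.Surjective (stdSimplex.asOrderHom ((cyl Δ[m]).map φ z.1).1) :=
        fun hs => hp (Function.Surjective.of_comp hs)
      rw [dif_pos hc, dif_pos hp]
      exact FunctorToTypes.naturality UB φ ⟨z.1, hp⟩
    · have hcs : isConstE ε z.1.2 := (hJ0 z.1 z.2).resolve_left hp
      have hTnat : T.app n' (Δ[m].map φ z.1.1) = Z.map φ (T.app n z.1.1) :=
        FunctorToTypes.naturality T φ z.1.1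
      have h3 : (cyl Δ[m]).map φ z.1
          = (Δ[m].map φ z.1.1, stdSimplex.const 1 ε n') := by
        show (Δ[m].map φ z.1.1, Δ[1].map φ z.1.2) = _
        rw [isConstE_elem hcs, map_const]
      by_cases hc : ¬ Function.Surjective (stdSimplex.asOrderHom ((cyl Δ[m]).map φ z.1).1)
      · rw [dif_pos hc, dif_neg hp]
        have hc' : ¬ Function.Surjective (stdSimplex.asOrderHom (Δ[m].map φ z.1.1)) := hc
        have hsub : (⟨(cyl Δ[m]).map φ z.1, hc⟩ : (bcyl m).obj n')
            = ⟨(Δ[m].map φ z.1.1, stdSimplex.const 1 ε n'), hc'⟩ := Subtype.ext h3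
        calc UB.app n' ⟨(cyl Δ[m]).map φ z.1, hc⟩
            = UB.app n' ⟨(Δ[m].map φ z.1.1, stdSimplex.const 1 ε n'), hc'⟩ :=
              congrArg (UB.app n') hsub
          _ = T.app n' (Δ[m].map φ z.1.1) := hUBT n' _ hc'
          _ = Z.map φ (T.app n z.1.1) := hTnat
      · rw [dif_neg hc, dif_neg hp]
        exact hTnat
  · apply SSet.hom_ext
    intro n
    refine ConcreteCategory.hom_ext _ _ fun z => ?_
    show g.app n (if h : ¬ Function.Surjective (stdSimplex.asOrderHom z.1.1)
      then UB.app n ⟨z.1, h⟩ else T.app n z.1.1) = H.app n z.1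
    by_cases hp : ¬ Function.Surjective (stdSimplex.asOrderHom z.1.1)
    · rw [dif_pos hp]
      exact ConcreteCategory.congr_hom (NatTrans.congr_app hUB n) ⟨z.1, hp⟩
    · rw [dif_neg hp]
      have hcs : isConstE ε z.1.2 := (hJ0 z.1 z.2).resolve_left hp
      have h1 := ConcreteCategory.congr_hom (NatTrans.congr_app hT n) z.1.1
      have h2 : ((z.1.1, stdSimplex.const 1 ε n) : (cyl Δ[m]).obj n) = z.1 :=
        Prod.ext rfl (isConstE_elem hcs).symm
      exact Eq.trans h1 (congrArg (H.app n) h2)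
  · intro n z hns hm
    exact dif_pos hns
  · intro n a hm
    by_cases hns : ¬ Function.Surjective (stdSimplex.asOrderHom a)
    · show (if h : ¬ Function.Surjective (stdSimplex.asOrderHom a) then _ else _) = _
      rw [dif_pos hns]
      exact hUBT n a hns
    · show (if h : ¬ Function.Surjective (stdSimplex.asOrderHom a) then _ else _) = _
      rw [dif_neg hns]

/-- (L1): prism lifting for a Kan fibration: a map defined on
`Δ[m] × {ε} ∪ ∂Δ[m] × Δ¹` extends over `Δ[m] × Δ¹`. -/
lemma cyl_lift {Z W : SSet.{0}} (g : Z ⟶ W) (hg : IsKanFibration g) (m : ℕ) (ε : Fin 2)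
    (T : Δ[m] ⟶ Z) (UB : bcyl m ⟶ Z) (H : cyl Δ[m] ⟶ W)
    (hT : T ≫ g = cylIncl ε Δ[m] ≫ H) (hUB : UB ≫ g = bIncl m ≫ H)
    (hTU : bEnd m ε ≫ UB = (SSet.boundary m).ι ≫ T) :
    ∃ L : cyl Δ[m] ⟶ Z, L ≫ g = H ∧ cylIncl ε Δ[m] ≫ L = T ∧ bIncl m ≫ L = UB := by
  classical
  obtain ⟨G0, hG0o, hG0U, hG0T⟩ := Jzero g T UB H hT hUB hTU
  have climb : ∀ s, s ≤ m + 1 → ∃ G : Jset m ε s ⟶ Z, G ≫ g = JIncl m ε s ≫ H ∧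
      ∀ n (z : (cyl Δ[m]).obj n) (h0 : JPred m ε 0 z) (h : JPred m ε s z),
        G.app n ⟨z, h⟩ = G0.app n ⟨z, h0⟩ := by
    intro s
    induction s with
    | zero =>
      intro _
      exact ⟨G0, hG0o, fun n z h0 h => rfl⟩
    | succ s ih =>
      intro hs1
      obtain ⟨G, hGo, hGr⟩ := ih (by omega)
      have hsm : s ≤ m := by omega
      rcases fin2_eq ε with hε | hε
      · subst hε
        obtain ⟨G', hG'o, hG'r⟩ := Jstep g hg (j0 := m - s) (by omega)
          (by intro j hj; rw [doneJ_zero, doneJ_zero]; omega)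
          (by intro j hj hd; rw [doneJ_zero] at hd; constructor
              · intro _; omega
              · intro h1; exact absurd h1 (by decide))
          (by intro h1; exact absurd h1 (by decide))
          (by intro _ j hj; rw [doneJ_zero]; omega)
          H G hGo
        refine ⟨G', hG'o, fun n z h0 h' => ?_⟩
        rw [hG'r n z (JPred_mono (by omega) h0) h', hGr n z h0 _]
      · subst hε
        obtain ⟨G', hG'o, hG'r⟩ := Jstep g hg (j0 := s) hsm
          (by intro j hj; rw [doneJ_one, doneJ_one]; omega)
          (by intro j hj hd; rw [doneJ_one] at hd; constructor
              · intro h1; exact absurd h1 (by decide)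
              · intro _; omega)
          (by intro _ j hj; rw [doneJ_one]; omega)
          (by intro h1; exact absurd h1 (by decide))
          H G hGo
        refine ⟨G', hG'o, fun n z h0 h' => ?_⟩
        rw [hG'r n z (JPred_mono (by omega) h0) h', hGr n z h0 _]
  obtain ⟨G, hGo, hGr⟩ := climb (m+1) le_rfl
  have htotal : ∀ {n} (z : (cyl Δ[m]).obj n), JPred m ε (m+1) z := by
    intro n z
    obtain ⟨j, hj, hc⟩ := exists_chain z
    refine Or.inr (Or.inr ⟨j, hj, ?_, hc⟩)
    rcases fin2_eq ε with hε | hε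
    · exact Or.inl ⟨hε, by omega⟩
    · exact Or.inr ⟨hε, by omega⟩
  refine ⟨{
    app := fun n => ↾fun z => G.app n ⟨z, htotal z⟩
    naturality := by
      intro n n' φ
      refine ConcreteCategory.hom_ext _ _ fun z => ?_
      exact FunctorToTypes.naturality G φ ⟨z, htotal z⟩ }, ?_, ?_, ?_⟩
  · apply SSet.hom_ext
    intro n
    refine ConcreteCategory.hom_ext _ _ fun z => ?_
    exact ConcreteCategory.congr_hom (NatTrans.congr_app hGo n) ⟨z, htotal z⟩
  · apply SSet.hom_ext
    intro n
    refine ConcreteCategory.hom_ext _ _ fun a => ?_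
    show G.app n ⟨(a, stdSimplex.const 1 ε n), _⟩ = T.app n a
    have h0 : JPred m ε 0 ((a, stdSimplex.const 1 ε n) : (cyl Δ[m]).obj n) :=
      Or.inr (Or.inl (fun p => rfl))
    erw [hGr n _ h0 _]
    exact hG0T n a h0
  · apply SSet.hom_ext
    intro n
    refine ConcreteCategory.hom_ext _ _ fun z => ?_
    show G.app n ⟨z.1, _⟩ = UB.app n z
    have h0 : JPred m ε 0 z.1 := Or.inl z.2
    erw [hGr n _ h0 _]
    have := hG0U n z.1 z.2 h0
    rw [this]
    rfl

end PrismLift2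

section BCylLift

open SSet

/-- The image of a simplex of `Δ[m]`, as a finite set of vertices. -/
def imgS {m : ℕ} {n : SimplexCategoryᵒᵖ} (a : Δ[m].obj n) : Finset (Fin (m+1)) :=
  Finset.image (stdSimplex.asOrderHom a) Finset.univ

lemma mem_imgS {m : ℕ} {n : SimplexCategoryᵒᵖ} (a : Δ[m].obj n) (p) :
    stdSimplex.asOrderHom a p ∈ imgS a :=
  Finset.mem_image_of_mem _ (Finset.mem_univ p)

lemma imgS_map_subset {m : ℕ} {n n' : SimplexCategoryᵒᵖ} (φ : n ⟶ n') (a : Δ[m].obj n) :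
    imgS (Δ[m].map φ a) ⊆ imgS a := by
  intro w hw
  obtain ⟨p, _, hp⟩ := Finset.mem_image.mp hw
  exact hp ▸ mem_imgS a _

lemma imgS_ne_univ {m : ℕ} {n : SimplexCategoryᵒᵖ} {a : Δ[m].obj n}
    (h : ¬ Function.Surjective (stdSimplex.asOrderHom a)) : imgS a ≠ Finset.univ := by
  rw [Function.Surjective] at h
  push_neg at h
  obtain ⟨w, hw⟩ := h
  intro hEq
  have : w ∈ imgS a := hEq ▸ Finset.mem_univ w
  obtain ⟨p, _, hp⟩ := Finset.mem_image.mp this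
  exact hw p hp

lemma card_le_of_ne_univ {m : ℕ} {S : Finset (Fin (m+1))} (h : S ≠ Finset.univ) :
    S.card ≤ m := by
  have h1 : S ⊂ Finset.univ := ⟨Finset.subset_univ S, fun h2 => h (le_antisymm (Finset.subset_univ S) h2)⟩
  have h2 := Finset.card_lt_card h1
  simp only [Finset.card_univ, Fintype.card_fin] at h2
  omega

/-- The order embedding `Δ[k] ⟶ Δ[m]` associated to a `(k+1)`-element subset `S`. -/
def embMap {m k : ℕ} (S : Finset (Fin (m+1))) (hc : S.card = k+1) : Δ[k] ⟶ Δ[m] :=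
  SSet.stdSimplex.map
    (SimplexCategory.Hom.mk (OrderEmbedding.toOrderHom (Finset.orderEmbOfFin S hc)))

lemma asOrderHom_embMap {m k : ℕ} (S : Finset (Fin (m+1))) (hc : S.card = k+1)
    {n} (x : Δ[k].obj n) (p) :
    stdSimplex.asOrderHom ((embMap S hc).app n x) p = Finset.orderEmbOfFin S hc (stdSimplex.asOrderHom x p) := rfl

lemma embMap_nonsurj {m k : ℕ} (S : Finset (Fin (m+1))) (hc : S.card = k+1)
    (hne : S ≠ Finset.univ) {n} (x : Δ[k].obj n) :
    ¬ Function.Surjective (stdSimplex.asOrderHom ((embMap S hc).app n x)) := by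
  have : ∃ w, w ∉ S := by
    by_contra hall
    push_neg at hall
    exact hne (Finset.eq_univ_iff_forall.mpr hall)
  obtain ⟨w, hw⟩ := this
  intro hs
  obtain ⟨p, hp⟩ := hs w
  apply hw
  rw [← hp, asOrderHom_embMap]
  exact Finset.orderEmbOfFin_mem S hc _

/-- The `(k+1)`-element subset `S` as a `k`-simplex of the boundary. -/
def bembMap {m k : ℕ} (S : Finset (Fin (m+1))) (hc : S.card = k+1)
    (hne : S ≠ Finset.univ) : Δ[k] ⟶ (∂Δ[m] : SSet.{0}) where
  app n := ↾fun x => ⟨(embMap S hc).app n x, embMap_nonsurj S hc hne x⟩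
  naturality n n' φ := by
    refine ConcreteCategory.hom_ext _ _ fun x => ?_
    exact Subtype.ext rfl

/-- The induced inclusion of cylinders `Δ[k] × Δ¹ ⟶ ∂Δ[m] × Δ¹`. -/
def cylEmbB {m k : ℕ} (S : Finset (Fin (m+1))) (hc : S.card = k+1)
    (hne : S ≠ Finset.univ) : cyl Δ[k] ⟶ bcyl m where
  app n := ↾fun z => ⟨((embMap S hc).app n z.1, z.2), embMap_nonsurj S hc hne z.1⟩
  naturality n n' φ := by
    refine ConcreteCategory.hom_ext _ _ fun z => ?_
    exact Subtype.ext (Prod.ext rfl rfl)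

/-- The compression of a simplex of `Δ[m]` with vertices in `S` to a simplex of `Δ[k]`. -/
def barS {m k : ℕ} (S : Finset (Fin (m+1))) (hc : S.card = k+1) {n}
    (a : Δ[m].obj n) (hmem : ∀ p, stdSimplex.asOrderHom a p ∈ S) : Δ[k].obj n :=
  stdSimplex.objMk
    ⟨fun p => (S.orderIsoOfFin hc).symm ⟨stdSimplex.asOrderHom a p, hmem p⟩, by
      intro p q hpq
      exact ((S.orderIsoOfFin hc).symm).monotone
        (Subtype.mk_le_mk.mpr ((stdSimplex.asOrderHom a).monotone hpq))⟩

lemma emb_barS {m k : ℕ} (S : Finset (Fin (m+1))) (hc : S.card = k+1) {n}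
    (a : Δ[m].obj n) (hmem : ∀ p, stdSimplex.asOrderHom a p ∈ S) :
    (embMap S hc).app n (barS S hc a hmem) = a := by
  apply simplexExt
  intro p
  rw [asOrderHom_embMap]
  show S.orderEmbOfFin hc ((S.orderIsoOfFin hc).symm ⟨stdSimplex.asOrderHom a p, hmem p⟩) = _
  rw [← Finset.coe_orderIsoOfFin_apply, OrderIso.apply_symm_apply]

lemma barS_map {m k : ℕ} (S : Finset (Fin (m+1))) (hc : S.card = k+1)
    {n n'} (φ : n ⟶ n') (a : Δ[m].obj n) (hmem : ∀ p, stdSimplex.asOrderHom a p ∈ S)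
    (hmem' : ∀ p, stdSimplex.asOrderHom (Δ[m].map φ a) p ∈ S) :
    barS S hc (Δ[m].map φ a) hmem' = Δ[k].map φ (barS S hc a hmem) := by
  apply simplexExt
  intro p
  rfl

lemma barS_nonsurj {m k : ℕ} (S : Finset (Fin (m+1))) (hc : S.card = k+1) {n}
    (a : Δ[m].obj n) (hmem : ∀ p, stdSimplex.asOrderHom a p ∈ S)
    (hcard : (imgS a).card ≤ k) :
    ¬ Function.Surjective (stdSimplex.asOrderHom (barS S hc a hmem)) := by
  intro hs
  have hsub : S ⊆ imgS a := by
    intro w hw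
    obtain ⟨p, hp⟩ := hs ((S.orderIsoOfFin hc).symm ⟨w, hw⟩)
    have : stdSimplex.asOrderHom ((embMap S hc).app n (barS S hc a hmem)) p = w := by
      rw [asOrderHom_embMap, hp]
      show ((S.orderIsoOfFin hc) ((S.orderIsoOfFin hc).symm ⟨w, hw⟩) : Fin (m+1)) = w
      rw [OrderIso.apply_symm_apply]
    have h5 := congrArg (fun y => stdSimplex.asOrderHom y p) (emb_barS S hc a hmem)
    have h6 : stdSimplex.asOrderHom a p = w := (h5.symm.trans this :)
    exact h6 ▸ mem_imgS a p
  have := Finset.card_le_card hsub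
  omega

/-- Membership predicate for the intermediate subcomplexes of `∂Δ[m] × Δ¹` in the
skeletal induction. -/
def VPred (m k : ℕ) {n : SimplexCategoryᵒᵖ} (z : (cyl Δ[m]).obj n) : Prop :=
  (¬ Function.Surjective (stdSimplex.asOrderHom z.1)) ∧
    (isConstE 1 z.2 ∨ (imgS z.1).card ≤ k)

lemma VPred_map {m k : ℕ} {n n' : SimplexCategoryᵒᵖ} (φ : n ⟶ n')
    {z : (cyl Δ[m]).obj n} (h : VPred m k z) : VPred m k ((cyl Δ[m]).map φ z) := by
  refine ⟨fun hs => h.1 (Function.Surjective.of_comp hs), ?_⟩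
  rcases h.2 with h2 | h2
  · exact Or.inl (fun p => h2 _)
  · exact Or.inr (le_trans (Finset.card_le_card (imgS_map_subset φ z.1)) h2)

def Vset (m k : ℕ) : SSet.{0} where
  obj n := { z : (cyl Δ[m]).obj n // VPred m k z }
  map {n n'} φ := ↾fun z => ⟨(cyl Δ[m]).map φ z.1, VPred_map φ z.2⟩
  map_id n := by
    refine ConcreteCategory.hom_ext _ _ fun z => ?_
    apply Subtype.ext
    exact ConcreteCategory.congr_hom ((cyl Δ[m]).map_id n) z.1
  map_comp φ ψ := by
    refine ConcreteCategory.hom_ext _ _ fun z => ?_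
    apply Subtype.ext
    exact ConcreteCategory.congr_hom ((cyl Δ[m]).map_comp φ ψ) z.1

def VIncl (m k : ℕ) : Vset m k ⟶ bcyl m where
  app n := ↾fun z => ⟨z.1, z.2.1⟩
  naturality n n' φ := rfl

lemma VPred_new_card {m k : ℕ} {n} {z : (cyl Δ[m]).obj n}
    (h' : VPred m (k+1) z) (h : ¬ VPred m k z) : (imgS z.1).card = k+1 := by
  rcases h'.2 with h2 | h2
  · exact absurd ⟨h'.1, Or.inl h2⟩ h
  · by_contra hne
    exact h ⟨h'.1, Or.inr (by omega)⟩

end BCylLift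

section BCylLift2

open SSet

lemma imgS_emb_card {m k : ℕ} (S : Finset (Fin (m+1))) (hc : S.card = k+1)
    {n} (x : Δ[k].obj n) :
    (imgS ((embMap S hc).app n x)).card ≤ (imgS x).card := by
  have himg : imgS ((embMap S hc).app n x)
      = Finset.image (Finset.orderEmbOfFin S hc) (imgS x) := by
    unfold imgS
    rw [Finset.image_image]
    rfl
  rw [himg]
  exact Finset.card_image_le

/-- The inclusion `∂Δ[k] × Δ¹ ⟶ V_k` induced by a `(k+1)`-element subset. -/
def bcylEmbV {m k : ℕ} (S : Finset (Fin (m+1))) (hc : S.card = k+1)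
    (hne : S ≠ Finset.univ) : bcyl k ⟶ Vset m k where
  app n := ↾fun z => ⟨((embMap S hc).app n z.1.1, z.1.2),
    ⟨embMap_nonsurj S hc hne z.1.1, Or.inr (by
      show (imgS ((embMap S hc).app n z.1.1)).card ≤ k
      have h1 := imgS_emb_card S hc z.1.1
      have h2 := card_le_of_ne_univ (imgS_ne_univ z.2)
      omega)⟩⟩
  naturality n n' φ := by
    refine ConcreteCategory.hom_ext _ _ fun z => ?_
    exact Subtype.ext (Prod.ext rfl rfl)

lemma PheqCongr {Z : SSet.{0}} {m k : ℕ}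
    (P : ∀ (S : Finset (Fin (m+1))), S.card = k+1 → S ≠ Finset.univ → (cyl Δ[k] ⟶ Z))
    {S S' : Finset (Fin (m+1))} (heq : S = S') (hc : S.card = k+1) (hne : S ≠ Finset.univ)
    (hc' : S'.card = k+1) (hne' : S' ≠ Finset.univ) {n} (a : Δ[m].obj n)
    (hmem : ∀ p, stdSimplex.asOrderHom a p ∈ S) (hmem' : ∀ p, stdSimplex.asOrderHom a p ∈ S') (b : Δ[1].obj n) :
    (P S hc hne).app n (barS S hc a hmem, b)
      = (P S' hc' hne').app n (barS S' hc' a hmem', b) := by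
  cases heq
  rfl

/-- (L2): a map defined on `∂Δ[m] × {1}` extends over `∂Δ[m] × Δ¹`, for any Kan
fibration. -/
lemma bcyl_lift {Z W : SSet.{0}} (g : Z ⟶ W) (hg : IsKanFibration g) (m : ℕ)
    (E : (∂Δ[m] : SSet.{0}) ⟶ Z) (H : bcyl m ⟶ W) (hE : E ≫ g = bEnd m 1 ≫ H) :
    ∃ U : bcyl m ⟶ Z, U ≫ g = H ∧ bEnd m 1 ≫ U = E := by
  classical
  have climb : ∀ k, ∃ G : Vset m k ⟶ Z, G ≫ g = VIncl m k ≫ H ∧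
      ∀ n (a : Δ[m].obj n) (hns : ¬ Function.Surjective (stdSimplex.asOrderHom a))
        (hm : VPred m k ((a, stdSimplex.const 1 1 n) : (cyl Δ[m]).obj n)),
        G.app n ⟨(a, stdSimplex.const 1 1 n), hm⟩ = E.app n ⟨a, hns⟩ := by
    intro k
    induction k with
    | zero =>
      have hconst : ∀ {n} (z : (cyl Δ[m]).obj n), VPred m 0 z → isConstE 1 z.2 := by
        intro n z hz
        rcases hz.2 with h | h
        · exact h
        · exfalso
          have h1 : (imgS z.1).Nonempty := ⟨stdSimplex.asOrderHom z.1 0, mem_imgS z.1 0⟩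
          have h2 := Finset.card_pos.mpr h1
          omega
      refine ⟨{
        app := fun n => ↾fun z => E.app n ⟨z.1.1, z.2.1⟩
        naturality := by
          intro n n' φ
          refine ConcreteCategory.hom_ext _ _ fun z => ?_
          exact FunctorToTypes.naturality E φ ⟨z.1.1, z.2.1⟩ }, ?_, ?_⟩
      · apply SSet.hom_ext
        intro n
        refine ConcreteCategory.hom_ext _ _ fun z => ?_
        have h1 := ConcreteCategory.congr_hom (NatTrans.congr_app hE n)
          (⟨z.1.1, z.2.1⟩ : (∂Δ[m] : SSet.{0}).obj n)
        refine Eq.trans h1 ?_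
        have h2 : ((z.1.1, stdSimplex.const 1 1 n) : (cyl Δ[m]).obj n) = z.1 :=
          Prod.ext rfl (isConstE_elem (hconst z.1 z.2)).symm
        exact congrArg (H.app n) (Subtype.ext h2)
      · intro n a hns hm
        rfl
    | succ k ih =>
      obtain ⟨G, hGo, hGE⟩ := ih
      have hPS : ∀ (S : Finset (Fin (m+1))) (hc : S.card = k+1) (hne : S ≠ Finset.univ),
          ∃ P : cyl Δ[k] ⟶ Z, P ≫ g = cylEmbB S hc hne ≫ H ∧
            cylIncl 1 Δ[k] ≫ P = bembMap S hc hne ≫ E ∧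
            bIncl k ≫ P = bcylEmbV S hc hne ≫ G := by
        intro S hc hne
        have hcomm1 : bembMap S hc hne ≫ bEnd m 1 = cylIncl 1 Δ[k] ≫ cylEmbB S hc hne := rfl
        have hcomm2 : bcylEmbV S hc hne ≫ VIncl m k = bIncl k ≫ cylEmbB S hc hne := rfl
        obtain ⟨P, hp1, hp2, hp3⟩ := cyl_lift g hg k 1
          (bembMap S hc hne ≫ E) (bcylEmbV S hc hne ≫ G) (cylEmbB S hc hne ≫ H)
          (by rw [Category.assoc, hE, ← Category.assoc, hcomm1, Category.assoc])
          (by rw [Category.assoc, hGo, ← Category.assoc, hcomm2, Category.assoc])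
          (by
            apply SSet.hom_ext
            intro n
            refine ConcreteCategory.hom_ext _ _ fun x => ?_
            exact hGE n ((embMap S hc).app n x.1) (embMap_nonsurj S hc hne x.1) _)
        exact ⟨P, hp1, hp2, hp3⟩
      choose P hP1 hP2 hP3 using hPS
      refine ⟨{
        app := fun n => ↾fun z => if h : VPred m k z.1 then G.app n ⟨z.1, h⟩ else
          (P (imgS z.1.1) (VPred_new_card z.2 h) (imgS_ne_univ z.2.1)).app n
            (barS (imgS z.1.1) (VPred_new_card z.2 h) z.1.1 (mem_imgS z.1.1), z.1.2)
        naturality := ?_ }, ?_, ?_⟩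
      · intro n n' φ
        refine ConcreteCategory.hom_ext _ _ fun z => ?_
        show (if h : VPred m k ((cyl Δ[m]).map φ z.1)
            then G.app n' ⟨(cyl Δ[m]).map φ z.1, h⟩ else _)
          = Z.map φ (if h : VPred m k z.1 then G.app n ⟨z.1, h⟩ else _)
        by_cases hz : VPred m k z.1
        · rw [dif_pos hz, dif_pos (VPred_map φ hz)]
          exact FunctorToTypes.naturality G φ ⟨z.1, hz⟩
        · rw [dif_neg hz]
          set S := imgS z.1.1 with hS
          have hc : S.card = k + 1 := VPred_new_card z.2 hz
          have hne : S ≠ Finset.univ := imgS_ne_univ z.2.1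
          set a' := Δ[m].map φ z.1.1 with ha'
          set b' := Δ[1].map φ z.1.2 with hb'
          have hmem' : ∀ p, stdSimplex.asOrderHom a' p ∈ S := fun p => mem_imgS z.1.1 _
          have hRHS : Z.map φ ((P S hc hne).app n
                (barS S hc z.1.1 (mem_imgS z.1.1), z.1.2))
              = (P S hc hne).app n' (barS S hc a' hmem', b') := by
            rw [barS_map S hc φ z.1.1 (mem_imgS z.1.1) hmem']
            exact (FunctorToTypes.naturality (P S hc hne) φ _).symm
          by_cases hz2 : VPred m k ((cyl Δ[m]).map φ z.1)
          · rw [dif_pos hz2, hRHS]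
            have hns' : ¬ Function.Surjective (stdSimplex.asOrderHom a') := hz2.1
            rcases hz2.2 with hcst | hcard
            · have hb'c : b' = stdSimplex.const 1 1 n' := isConstE_elem hcst
              have hzz : ((cyl Δ[m]).map φ z.1)
                  = ((a', stdSimplex.const 1 1 n') : (cyl Δ[m]).obj n') :=
                Prod.ext rfl hb'c
              have hm2 : VPred m k
                  ((a', stdSimplex.const 1 1 n') : (cyl Δ[m]).obj n') := hzz ▸ hz2
              have hsub : (⟨(cyl Δ[m]).map φ z.1, hz2⟩ : (Vset m k).obj n')
                  = ⟨(a', stdSimplex.const 1 1 n'), hm2⟩ := Subtype.ext hzz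
              have hL : G.app n' ⟨(cyl Δ[m]).map φ z.1, hz2⟩ = E.app n' ⟨a', hns'⟩ := by
                refine Eq.trans (congrArg (G.app n') hsub) ?_
                exact hGE n' a' hns' hm2
              have hR : (P S hc hne).app n' (barS S hc a' hmem', b')
                  = E.app n' ⟨a', hns'⟩ := by
                rw [hb'c]
                have h1 := ConcreteCategory.congr_hom (NatTrans.congr_app (hP2 S hc hne) n')
                  (barS S hc a' hmem')
                refine Eq.trans h1 ?_
                exact congrArg (E.app n') (Subtype.ext (emb_barS S hc a' hmem'))
              rw [hL, hR]
            · have hnsbar : ¬ Function.Surjective (stdSimplex.asOrderHom (barS S hc a' hmem')) :=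
                barS_nonsurj S hc a' hmem' hcard
              have h1 := ConcreteCategory.congr_hom (NatTrans.congr_app (hP3 S hc hne) n')
                (⟨(barS S hc a' hmem', b'), hnsbar⟩ : (bcyl k).obj n')
              refine Eq.trans ?_ h1.symm
              exact congrArg (G.app n')
                (Subtype.ext (Prod.ext (emb_barS S hc a' hmem').symm rfl))
          · rw [dif_neg hz2, hRHS]
            have hz2' : VPred m (k+1) ((cyl Δ[m]).map φ z.1) := VPred_map φ z.2
            have hSsub : imgS a' ⊆ S := imgS_map_subset φ z.1.1
            have hcard2 : (imgS a').card = k + 1 := VPred_new_card hz2' hz2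
            have hceq : imgS a' = S := Finset.eq_of_subset_of_card_le hSsub
              (by rw [hc, hcard2])
            exact PheqCongr P hceq _ _ hc hne a' (mem_imgS a') hmem' b'
      · apply SSet.hom_ext
        intro n
        refine ConcreteCategory.hom_ext _ _ fun z => ?_
        show g.app n (if h : VPred m k z.1 then G.app n ⟨z.1, h⟩ else _)
          = H.app n ⟨z.1, z.2.1⟩
        by_cases hz : VPred m k z.1
        · rw [dif_pos hz]
          exact ConcreteCategory.congr_hom (NatTrans.congr_app hGo n) ⟨z.1, hz⟩
        · rw [dif_neg hz]
          set S := imgS z.1.1 with hS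
          have hc : S.card = k + 1 := VPred_new_card z.2 hz
          have hne : S ≠ Finset.univ := imgS_ne_univ z.2.1
          have h1 := ConcreteCategory.congr_hom (NatTrans.congr_app (hP1 S hc hne) n)
            ((barS S hc z.1.1 (mem_imgS z.1.1), z.1.2) : (cyl Δ[k]).obj n)
          refine Eq.trans h1 ?_
          exact congrArg (H.app n)
            (Subtype.ext (Prod.ext (emb_barS S hc z.1.1 (mem_imgS z.1.1)) rfl))
      · intro n a hns hm
        show (if h : VPred m k ((a, stdSimplex.const 1 1 n) : (cyl Δ[m]).obj n)
            then _ else _) = E.app n ⟨a, hns⟩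
        by_cases hz : VPred m k ((a, stdSimplex.const 1 1 n) : (cyl Δ[m]).obj n)
        · rw [dif_pos hz]
          exact hGE n a hns hz
        · rw [dif_neg hz]
          set S := imgS ((a, stdSimplex.const 1 1 n) : (cyl Δ[m]).obj n).1 with hS
          have hc : S.card = k + 1 := VPred_new_card hm hz
          have hne : S ≠ Finset.univ := imgS_ne_univ hm.1
          have h1 := ConcreteCategory.congr_hom (NatTrans.congr_app (hP2 S hc hne) n)
            (barS S hc a (mem_imgS a))
          refine Eq.trans h1 ?_
          exact congrArg (E.app n) (Subtype.ext (emb_barS S hc a (mem_imgS a)))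
  obtain ⟨G, hGo, hGE⟩ := climb m
  have htotal : ∀ {n} (z : (cyl Δ[m]).obj n),
      ¬ Function.Surjective (stdSimplex.asOrderHom z.1) → VPred m m z := by
    intro n z h
    refine ⟨h, Or.inr ?_⟩
    exact card_le_of_ne_univ (imgS_ne_univ h)
  refine ⟨{
    app := fun n => ↾fun z => G.app n ⟨z.1, htotal z.1 z.2⟩
    naturality := by
      intro n n' φ
      refine ConcreteCategory.hom_ext _ _ fun z => ?_
      exact FunctorToTypes.naturality G φ ⟨z.1, htotal z.1 z.2⟩ }, ?_, ?_⟩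
  · apply SSet.hom_ext
    intro n
    refine ConcreteCategory.hom_ext _ _ fun z => ?_
    exact ConcreteCategory.congr_hom (NatTrans.congr_app hGo n) ⟨z.1, htotal z.1 z.2⟩
  · apply SSet.hom_ext
    intro n
    refine ConcreteCategory.hom_ext _ _ fun x => ?_
    exact hGE n x.1 x.2 _

end BCylLift2

section Plumbing

open SSet

/-- The constant map `K ⟶ Δ¹ \ X` at an edge `e`. -/
def eConstMapK (K : SSet.{0}) {X : BSSet} (e : X.obj (op ⦋1⦌, op ⦋0⦌)) :
    K ⟶ under Δ[1] X where
  app n := ↾fun _ => eConst n.unop e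
  naturality n n' φ := by
    refine ConcreteCategory.hom_ext _ _ fun k => ?_
    exact (eConst_whisker φ.unop e).symm

lemma comp_eConstMapK {K K' : SSet.{0}} (w : K' ⟶ K) {X : BSSet}
    (e : X.obj (op ⦋1⦌, op ⦋0⦌)) : w ≫ eConstMapK K e = eConstMapK K' e := rfl

lemma eConstMapK_push (K : SSet.{0}) {X Y : BSSet} (f : X ⟶ Y)
    (e : X.obj (op ⦋1⦌, op ⦋0⦌)) :
    eConstMapK K e ≫ underPush Δ[1] f = eConstMapK K (fApp f e) := by
  apply NatTrans.ext
  funext n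
  refine ConcreteCategory.hom_ext _ _ fun k => ?_
  exact eConst_comp f e

lemma std_map_apply {N : SimplexCategory} {n n' : SimplexCategoryᵒᵖ} (φ : n ⟶ n')
    (x : (SSet.stdSimplex.{0}.obj N).obj n) :
    (SSet.stdSimplex.{0}.obj N).map φ x
      = (SSet.stdSimplex.objEquiv (n := N) (m := n')).symm
          (φ.unop ≫ (SSet.stdSimplex.objEquiv (n := N) (m := n)) x) := rfl

lemma std_map_idSimplex {N : SimplexCategory} {n : SimplexCategoryᵒᵖ}
    (φ : op N ⟶ n) :
    (SSet.stdSimplex.{0}.obj N).map φ (idSimplex N)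
      = (SSet.stdSimplex.objEquiv (n := N) (m := n)).symm φ.unop := by
  have h : (SSet.stdSimplex.objEquiv (n := N) (m := op N)) (idSimplex N) = 𝟙 N :=
    Equiv.apply_symm_apply _ _
  rw [std_map_apply, h, Category.comp_id]

/-- Any map `Δ¹ □ Δ⁰ → X` is determined by its value at the pair of identities. -/
lemma yonedaBox_self {X : BSSet} (σ : boxObj Δ[1] Δ[0] ⟶ X) :
    yonedaBox (σ.app (op ⦋1⦌, op ⦋0⦌) (idSimplex ⦋1⦌, idSimplex ⦋0⦌)) = σ := by
  apply NatTrans.ext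
  funext p
  refine ConcreteCategory.hom_ext _ _ fun x => ?_
  have harg : (boxObj Δ[1] Δ[0]).map
      (((SSet.stdSimplex.objEquiv x.1).op,
        (SSet.stdSimplex.objEquiv x.2).op) :
        (((op ⦋1⦌ : SimplexCategoryᵒᵖ), (op ⦋0⦌ : SimplexCategoryᵒᵖ)) :
          SimplexCategoryᵒᵖ × SimplexCategoryᵒᵖ) ⟶ p)
      (((idSimplex ⦋1⦌, idSimplex ⦋0⦌)) :
        (boxObj Δ[1] Δ[0]).obj (((op ⦋1⦌ : SimplexCategoryᵒᵖ), (op ⦋0⦌ : SimplexCategoryᵒᵖ)) :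
          SimplexCategoryᵒᵖ × SimplexCategoryᵒᵖ)) = x := by
    apply Prod.ext
    · show Δ[1].map (SSet.stdSimplex.objEquiv x.1).op (idSimplex ⦋1⦌) = x.1
      rw [std_map_idSimplex]
      exact Equiv.symm_apply_apply _ _
    · show Δ[0].map (SSet.stdSimplex.objEquiv x.2).op (idSimplex ⦋0⦌) = x.2
      rw [std_map_idSimplex]
      exact Equiv.symm_apply_apply _ _
  conv_rhs => rw [← harg]
  exact (FunctorToTypes.naturality σ
    (((SSet.stdSimplex.objEquiv x.1).op,
      (SSet.stdSimplex.objEquiv x.2).op) :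
      (((op ⦋1⦌ : SimplexCategoryᵒᵖ), (op ⦋0⦌ : SimplexCategoryᵒᵖ)) :
        SimplexCategoryᵒᵖ × SimplexCategoryᵒᵖ) ⟶ p)
    (((idSimplex ⦋1⦌, idSimplex ⦋0⦌)) :
      (boxObj Δ[1] Δ[0]).obj (((op ⦋1⦌ : SimplexCategoryᵒᵖ), (op ⦋0⦌ : SimplexCategoryᵒᵖ)) :
        SimplexCategoryᵒᵖ × SimplexCategoryᵒᵖ))).symm

/-- The edge of `X` underlying a vertex of `Δ¹ \ X`. -/
def eltOf {X : BSSet} (t : Δ[0] ⟶ under Δ[1] X) : X.obj (op ⦋1⦌, op ⦋0⦌) :=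
  (t.app (op (⦋0⦌ : SimplexCategory)) (idSimplex ⦋0⦌)).app
    (((op ⦋1⦌ : SimplexCategoryᵒᵖ), (op ⦋0⦌ : SimplexCategoryᵒᵖ)) :
      SimplexCategoryᵒᵖ × SimplexCategoryᵒᵖ) (idSimplex ⦋1⦌, idSimplex ⦋0⦌)

lemma toPt_eConst {X : BSSet} (K : SSet.{0}) (s : Δ[0] ⟶ under Δ[1] X) :
    toPt K ≫ s = eConstMapK K (eltOf s) := by
  apply NatTrans.ext
  funext n
  refine ConcreteCategory.hom_ext _ _ fun k => ?_
  show s.app n (stdSimplex.const 0 0 n) = eConst n.unop (eltOf s)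
  have h1 : stdSimplex.const 0 0 n
      = Δ[0].map ((toZero n.unop).op : op (⦋0⦌ : SimplexCategory) ⟶ n) (idSimplex ⦋0⦌) :=
    pt_unique _ _
  rw [h1, FunctorToTypes.naturality s
    ((toZero n.unop).op : op (⦋0⦌ : SimplexCategory) ⟶ n) (idSimplex ⦋0⦌)]
  show boxMap (𝟙 Δ[1]) (SSet.stdSimplex.map (toZero n.unop)) ≫ s.app (op ⦋0⦌) (idSimplex ⦋0⦌)
    = eConst n.unop (eltOf s)
  rw [eConst, ← yonedaBox_self (s.app (op ⦋0⦌) (idSimplex ⦋0⦌))]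
  rfl

lemma fibFst_cancel {B : SSet.{0}} (ι : Δ[1] ⟶ B) (X : BSSet) (e : X.obj (op ⦋1⦌, op ⦋0⦌))
    {K : SSet.{0}} {t t' : K ⟶ fib ι X e}
    (h : t ≫ fibFst ι X e = t' ≫ fibFst ι X e) : t = t' := by
  apply NatTrans.ext
  funext n
  refine ConcreteCategory.hom_ext _ _ fun k => ?_
  apply Subtype.ext
  exact ConcreteCategory.congr_hom (NatTrans.congr_app h n) k

lemma fib_factor {B : SSet.{0}} (ι : Δ[1] ⟶ B) (X : BSSet) (e : X.obj (op ⦋1⦌, op ⦋0⦌))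
    {K : SSet.{0}} (t : K ⟶ under B X) (h : t ≫ underWhisker ι X = eConstMapK K e) :
    ∃ t' : K ⟶ fib ι X e, t' ≫ fibFst ι X e = t := by
  refine ⟨{
    app := fun n => ↾fun k => ⟨t.app n k, ConcreteCategory.congr_hom (NatTrans.congr_app h n) k⟩
    naturality := ?_ }, rfl⟩
  intro n n' φ
  refine ConcreteCategory.hom_ext _ _ fun k => ?_
  apply Subtype.ext
  exact ConcreteCategory.congr_hom (t.naturality φ) k

lemma fibFst_edge {B : SSet.{0}} (ι : Δ[1] ⟶ B) (X : BSSet) (e : X.obj (op ⦋1⦌, op ⦋0⦌)) :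
    fibFst ι X e ≫ underWhisker ι X = eConstMapK (fib ι X e) e := by
  apply NatTrans.ext
  funext n
  refine ConcreteCategory.hom_ext _ _ fun σ => ?_
  exact σ.2

lemma underWhisker_comp {A A' A'' : SSet.{0}} (u : A ⟶ A') (v : A' ⟶ A'') (X : BSSet) :
    underWhisker (u ≫ v) X = underWhisker v X ≫ underWhisker u X := rfl

lemma mUnderIncl_cancel {A : MSSet} {X : MBSSet} {K : SSet.{0}} {t t' : K ⟶ mUnder A X}
    (h : t ≫ mUnderIncl A X = t' ≫ mUnderIncl A X) : t = t' := by
  apply NatTrans.ext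
  funext n
  refine ConcreteCategory.hom_ext _ _ fun k => ?_
  apply Subtype.ext
  exact ConcreteCategory.congr_hom (NatTrans.congr_app h n) k

lemma mUnderWhisker_incl {A A' : MSSet} (u : A ⟶ A') (X : MBSSet) :
    mUnderWhisker u X ≫ mUnderIncl A X = mUnderIncl A' X ≫ underWhisker u.1 X.carrier := rfl

lemma mUnderPush_incl (A : MSSet) {X Y : MBSSet} (f : X ⟶ Y) :
    mUnderPush A f ≫ mUnderIncl A Y = mUnderIncl A X ≫ underPush A.carrier f.1 := rfl

lemma fibToMarked_incl {B : SSet.{0}} (ι : Δ[1] ⟶ B) (X : MBSSet)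
    (e : X.carrier.obj (op ⦋1⦌, op ⦋0⦌)) (he : e ∈ X.marked) :
    fibToMarked ι X e he ≫ mUnderIncl (mkL B ι) X = fibFst ι X.carrier e := rfl

/-- Factorization of an `A`-marked compatible map through the `Δⁿ`-marked division. -/
lemma mUnder_factor {nn : ℕ} {A : SSet.{0}} (i : A ⟶ Δ[nn]) (ι : Δ[1] ⟶ A) (X : MBSSet)
    {K : SSet.{0}} (t : K ⟶ under Δ[nn] X.carrier) (s : K ⟶ mUnder (mkL A ι) X)
    (hts : t ≫ underWhisker i X.carrier = s ≫ mUnderIncl (mkL A ι) X) :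
    ∃ t' : K ⟶ mUnder (mkL Δ[nn] (ι ≫ i)) X,
      t' ≫ mUnderIncl (mkL Δ[nn] (ι ≫ i)) X = t := by
  refine ⟨{
    app := fun n => ↾fun k => ⟨t.app n k, ?_⟩
    naturality := ?_ }, rfl⟩
  · rintro a (⟨x, rfl⟩ | ha) b
    · -- degenerate edge
      have hnat := ConcreteCategory.congr_hom ((t.app n k).naturality
        ((((SimplexCategory.σ 0).op : sc 0 ⟶ sc 1), 𝟙 (sc 0)) :
          ((sc 0, sc 0) : SimplexCategoryᵒᵖ × SimplexCategoryᵒᵖ) ⟶ (sc 1, sc 0))) ((x, b) : _ × _)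
      simp only [types_comp_apply, boxObj_map, FunctorToTypes.map_id_apply] at hnat
      exact Set.mem_of_eq_of_mem hnat (X.degen_marked _)
    · -- the distinguished edge
      erw [Set.mem_singleton_iff] at ha
      subst ha
      have h1 : boxMap i (𝟙 (SSet.stdSimplex.obj n.unop)) ≫ t.app n k
          = (s.app n k).1 := ConcreteCategory.congr_hom (NatTrans.congr_app hts n) k
      have h2 := ConcreteCategory.congr_hom (NatTrans.congr_app h1
        (((op ⦋1⦌ : SimplexCategoryᵒᵖ), (op ⦋0⦌ : SimplexCategoryᵒᵖ)) :
          SimplexCategoryᵒᵖ × SimplexCategoryᵒᵖ)) ((ι.app (op ⦋1⦌) (idSimplex ⦋1⦌), b) : _ × _)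
      have h3 : (t.app n k).app ((op ⦋1⦌ : SimplexCategoryᵒᵖ), (op ⦋0⦌ : SimplexCategoryᵒᵖ))
          ((ι ≫ i).app (op ⦋1⦌) (idSimplex ⦋1⦌), b) ∈ X.marked := by
        rw [show ((t.app n k).app ((op ⦋1⦌ : SimplexCategoryᵒᵖ), (op ⦋0⦌ : SimplexCategoryᵒᵖ))
            ((ι ≫ i).app (op ⦋1⦌) (idSimplex ⦋1⦌), b))
          = (s.app n k).1.app ((op ⦋1⦌ : SimplexCategoryᵒᵖ), (op ⦋0⦌ : SimplexCategoryᵒᵖ))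
            (ι.app (op ⦋1⦌) (idSimplex ⦋1⦌), b) from h2]
        exact (s.app n k).2 (ι.app (op ⦋1⦌) (idSimplex ⦋1⦌)) (Or.inr rfl) b
      exact h3
  · intro n n' φ
    refine ConcreteCategory.hom_ext _ _ fun k => ?_
    apply Subtype.ext
    exact ConcreteCategory.congr_hom (t.naturality φ) k

end Plumbing

/-- for a Reedy fibration `f : X ⟶ Y` of marked bisimplicial sets, `n ≥ 2` and
a simplicial subset `i : A ⊆ Δⁿ` containing the edge `Δ^{0,1}`, the marked gap map
`⟨iℒ \\ f⟩ : (Δⁿ)^ℒ \\ X ⟶ (Δⁿ)^ℒ \\ Y ×_{A^ℒ \\ Y} A^ℒ \\ X` is a trivial Kan fibration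
iff for every marked edge `e ∈ X_{1,0}` the pointwise map
`p_e : (Δⁿ \\ X̊)^e ⟶ (Δⁿ \\ Y̊)^{f(e)} ×_{(A \\ Y̊)^{f(e)}} (A \\ X̊)^e` is a trivial Kan
fibration. -/
theorem marked_gap_trivial_fibration_iff_pointwise {X Y : MBSSet} (f : X ⟶ Y)
    (hf : IsReedyFibration f.1) (n : ℕ) (hn : 2 ≤ n) (A : SSet.{0}) (i : A ⟶ Δ[n])
    (hi : Mono i) (ι : Δ[1] ⟶ A) (hedge : ι ≫ i = edge01 n (by omega)) :
    IsTrivialKanFibration (mUnderGap (mkLHom i ι (ι ≫ i) rfl) f) ↔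
      ∀ e ∈ X.marked, IsTrivialKanFibration (fibGap i ι f.1 e) := by
  have hgfst : underGap i f.1 ≫ pullback.fst (underPush A f.1) (underWhisker i Y.carrier)
      = underWhisker i X.carrier := pullback.lift_fst _ _ _
  have hgsnd : underGap i f.1 ≫ pullback.snd (underPush A f.1) (underWhisker i Y.carrier)
      = underPush Δ[n] f.1 := pullback.lift_snd _ _ _
  have hWX : mUnderWhisker (mkLHom i ι (ι ≫ i) rfl) X ≫ mUnderIncl (mkL A ι) X
      = mUnderIncl (mkL Δ[n] (ι ≫ i)) X ≫ underWhisker i X.carrier := rfl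
  have hPXY : mUnderPush (mkL Δ[n] (ι ≫ i)) f ≫ mUnderIncl (mkL Δ[n] (ι ≫ i)) Y
      = mUnderIncl (mkL Δ[n] (ι ≫ i)) X ≫ underPush Δ[n] f.1 := rfl
  constructor
  · -- (1) → (2)
    intro h1 e he m
    have hef : fApp f.1 e ∈ Y.marked := f.2 e he
    apply (gap_lift_iff ((SSet.boundary m).ι) (fibRes i ι X.carrier e)
      (fibPush (ι ≫ i) f.1 e) (fibPush ι f.1 e) (fibRes i ι Y.carrier (fApp f.1 e))
      (fibSq i ι f.1 e)).mpr
    intro F uA vY huv hcc1 hcc2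
    have hmk := (gap_lift_iff ((SSet.boundary m).ι)
      (mUnderWhisker (mkLHom i ι (ι ≫ i) rfl) X) (mUnderPush (mkL Δ[n] (ι ≫ i)) f)
      (mUnderPush (mkL A ι) f) (mUnderWhisker (mkLHom i ι (ι ≫ i) rfl) Y)
      (mUnderSq (mkLHom i ι (ι ≫ i) rfl) f)).mp (h1 m)
    obtain ⟨l, hl1, hl2, hl3⟩ := hmk (F ≫ fibToMarked (ι ≫ i) X e he)
      (uA ≫ fibToMarked ι X e he) (vY ≫ fibToMarked (ι ≫ i) Y (fApp f.1 e) hef)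
      (by
        apply NatTrans.ext
        funext nn
        refine ConcreteCategory.hom_ext _ _ fun k => ?_
        apply Subtype.ext
        have hv := congrArg Subtype.val (ConcreteCategory.congr_hom (NatTrans.congr_app huv nn) k)
        exact hv)
      (by
        apply NatTrans.ext
        funext nn
        refine ConcreteCategory.hom_ext _ _ fun k => ?_
        apply Subtype.ext
        have hv := congrArg Subtype.val (ConcreteCategory.congr_hom (NatTrans.congr_app hcc1 nn) k)
        exact hv)
      (by
        apply NatTrans.ext
        funext nn
        refine ConcreteCategory.hom_ext _ _ fun k => ?_
        apply Subtype.ext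
        have hv := congrArg Subtype.val (ConcreteCategory.congr_hom (NatTrans.congr_app hcc2 nn) k)
        exact hv)
    have step1 : (l ≫ mUnderIncl (mkL Δ[n] (ι ≫ i)) X) ≫ underWhisker i X.carrier
        = uA ≫ fibFst ι X.carrier e := by
      erw [Category.assoc, ← hWX, ← Category.assoc, hl2, Category.assoc, fibToMarked_incl]
    have hedgel : (l ≫ mUnderIncl (mkL Δ[n] (ι ≫ i)) X) ≫ underWhisker (ι ≫ i) X.carrier
        = eConstMapK Δ[m] e := by
      erw [underWhisker_comp, ← Category.assoc, step1, Category.assoc, fibFst_edge,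
        comp_eConstMapK]
    obtain ⟨l', hl'⟩ := fib_factor (ι ≫ i) X.carrier e
      (l ≫ mUnderIncl (mkL Δ[n] (ι ≫ i)) X) hedgel
    refine ⟨l', ?_, ?_, ?_⟩
    · apply fibFst_cancel (ι ≫ i) X.carrier e
      erw [Category.assoc, hl', ← Category.assoc, hl1, Category.assoc, fibToMarked_incl]
    · apply fibFst_cancel ι X.carrier e
      erw [Category.assoc, ← fibFst_whisker i ι X.carrier e, ← Category.assoc, hl', step1]
    · apply fibFst_cancel (ι ≫ i) Y.carrier (fApp f.1 e)
      erw [Category.assoc, ← fibFst_push (ι ≫ i) f.1 e, ← Category.assoc, hl',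
        Category.assoc, ← hPXY, ← Category.assoc, hl3,
        Category.assoc, fibToMarked_incl]
  · -- (2) → (1)
    intro h2 m
    have hKan : IsKanFibration (underGap i f.1) := hf i hi
    apply (gap_lift_iff ((SSet.boundary m).ι)
      (mUnderWhisker (mkLHom i ι (ι ≫ i) rfl) X) (mUnderPush (mkL Δ[n] (ι ≫ i)) f)
      (mUnderPush (mkL A ι) f) (mUnderWhisker (mkLHom i ι (ι ≫ i) rfl) Y)
      (mUnderSq (mkLHom i ι (ι ≫ i) rfl) f)).mpr
    intro F u v huv hcc1 hcc2
    set Fo : (∂Δ[m] : SSet.{0}) ⟶ under Δ[n] X.carrier := F ≫ mUnderIncl (mkL Δ[n] (ι ≫ i)) X with hFo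
    set uo : Δ[m] ⟶ under A X.carrier := u ≫ mUnderIncl (mkL A ι) X with huo
    set vo : Δ[m] ⟶ under Δ[n] Y.carrier := v ≫ mUnderIncl (mkL Δ[n] (ι ≫ i)) Y with hvo
    have huvo : uo ≫ underPush A f.1 = vo ≫ underWhisker i Y.carrier := by
      apply NatTrans.ext
      funext nn
      refine ConcreteCategory.hom_ext _ _ fun k => ?_
      have hv := congrArg Subtype.val (ConcreteCategory.congr_hom (NatTrans.congr_app huv nn) k)
      exact hv
    have h1o : Fo ≫ underWhisker i X.carrier = (SSet.boundary m).ι ≫ uo := by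
      apply NatTrans.ext
      funext nn
      refine ConcreteCategory.hom_ext _ _ fun k => ?_
      have hv := congrArg Subtype.val (ConcreteCategory.congr_hom (NatTrans.congr_app hcc1 nn) k)
      exact hv
    have h2o : Fo ≫ underPush Δ[n] f.1 = (SSet.boundary m).ι ≫ vo := by
      apply NatTrans.ext
      funext nn
      refine ConcreteCategory.hom_ext _ _ fun k => ?_
      have hv := congrArg Subtype.val (ConcreteCategory.congr_hom (NatTrans.congr_app hcc2 nn) k)
      exact hv
    -- the distinguished marked edge
    set r := uo ≫ underWhisker ι X.carrier with hr
    set s0 := vertexMap m 0 ≫ r with hs0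
    set e := eltOf s0 with hedef
    have he : e ∈ X.marked :=
      (u.app (op ⦋0⦌) ((vertexMap m 0).app (op ⦋0⦌) (idSimplex ⦋0⦌))).2
        (ι.app (op ⦋1⦌) (idSimplex ⦋1⦌)) (Or.inr rfl) (idSimplex ⦋0⦌)
    have hconst_r : constTo0 m ≫ r = eConstMapK Δ[m] e := by
      rw [constTo0, Category.assoc, ← hs0]
      exact toPt_eConst Δ[m] s0
    clear_value Fo uo vo r s0 e
    -- Step A: lift the boundary homotopy
    have Hbw : (bIncl m ≫ contr m ≫ uo) ≫ underPush A f.1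
        = (bIncl m ≫ contr m ≫ vo) ≫ underWhisker i Y.carrier := by
      simp only [Category.assoc]
      rw [huvo]
    have hbe1 : bEnd m 1 ≫ (bIncl m ≫ contr m) = (SSet.boundary m).ι := by
      rw [← Category.assoc, bEnd_bIncl, Category.assoc, cylIncl_contr_one, Category.comp_id]
    have hbe0 : bEnd m 0 ≫ (bIncl m ≫ contr m)
        = (SSet.boundary m).ι ≫ constTo0 m := by
      rw [← Category.assoc, bEnd_bIncl, Category.assoc, cylIncl_contr_zero]
    have hE : Fo ≫ underGap i f.1
        = bEnd m 1 ≫ pullback.lift (bIncl m ≫ contr m ≫ uo) (bIncl m ≫ contr m ≫ vo) Hbw := by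
      apply pullback.hom_ext
      · simp only [Category.assoc]
        rw [hgfst, pullback.lift_fst, h1o]
        have h := congrArg (fun q => q ≫ uo) hbe1
        simp only [Category.assoc] at h
        rw [h]
      · simp only [Category.assoc]
        rw [hgsnd, pullback.lift_snd, h2o]
        have h := congrArg (fun q => q ≫ vo) hbe1
        simp only [Category.assoc] at h
        rw [h]
    obtain ⟨U, hU1, hU2⟩ := bcyl_lift (underGap i f.1) hKan m Fo
      (pullback.lift (bIncl m ≫ contr m ≫ uo) (bIncl m ≫ contr m ≫ vo) Hbw) hE
    have hUw : U ≫ underWhisker i X.carrier = bIncl m ≫ contr m ≫ uo := by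
      rw [← hgfst, ← Category.assoc, hU1, pullback.lift_fst]
    have hUp : U ≫ underPush Δ[n] f.1 = bIncl m ≫ contr m ≫ vo := by
      rw [← hgsnd, ← Category.assoc, hU1, pullback.lift_snd]
    -- Step B: solve the constant problem using the hypothesis
    have hU0a : (bEnd m 0 ≫ U) ≫ underWhisker i X.carrier
        = (SSet.boundary m).ι ≫ constTo0 m ≫ uo := by
      rw [Category.assoc, hUw]
      have h := congrArg (fun q => q ≫ uo) hbe0
      simp only [Category.assoc] at h
      rw [h]
    have hU0b : (bEnd m 0 ≫ U) ≫ underPush Δ[n] f.1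
        = (SSet.boundary m).ι ≫ constTo0 m ≫ vo := by
      rw [Category.assoc, hUp]
      have h := congrArg (fun q => q ≫ vo) hbe0
      simp only [Category.assoc] at h
      rw [h]
    have hedgeX : (constTo0 m ≫ uo) ≫ underWhisker ι X.carrier = eConstMapK Δ[m] e := by
      rw [Category.assoc, ← hr, hconst_r]
    obtain ⟨uA0, huA0⟩ := fib_factor ι X.carrier e (constTo0 m ≫ uo) hedgeX
    have hedgeXn : (bEnd m 0 ≫ U) ≫ underWhisker (ι ≫ i) X.carrier
        = eConstMapK (∂Δ[m] : SSet.{0}) e := by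
      rw [underWhisker_comp]
      simp only [Category.assoc]
      rw [← Category.assoc U, hUw]
      simp only [Category.assoc]
      rw [← hr]
      have h := congrArg (fun q => q ≫ r) hbe0
      simp only [Category.assoc] at h
      rw [h, hconst_r, comp_eConstMapK]
    obtain ⟨F0, hF0⟩ := fib_factor (ι ≫ i) X.carrier e (bEnd m 0 ≫ U) hedgeXn
    have hedgeY : (constTo0 m ≫ vo) ≫ underWhisker (ι ≫ i) Y.carrier
        = eConstMapK Δ[m] (fApp f.1 e) := by
      rw [underWhisker_comp]
      simp only [Category.assoc]
      rw [← Category.assoc vo, ← huvo]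
      simp only [Category.assoc]
      rw [← underSq ι f.1, ← Category.assoc uo, ← hr, ← Category.assoc, hconst_r,
        eConstMapK_push]
    obtain ⟨vY0, hvY0⟩ := fib_factor (ι ≫ i) Y.carrier (fApp f.1 e) (constTo0 m ≫ vo) hedgeY
    have c1f : uA0 ≫ fibPush ι f.1 e = vY0 ≫ fibRes i ι Y.carrier (fApp f.1 e) := by
      apply fibFst_cancel ι Y.carrier (fApp f.1 e)
      simp only [Category.assoc]
      rw [← fibFst_push ι f.1 e, ← fibFst_whisker i ι Y.carrier (fApp f.1 e),
        ← Category.assoc, huA0, ← Category.assoc, hvY0]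
      simp only [Category.assoc]
      rw [huvo]
    have c2f : F0 ≫ fibRes i ι X.carrier e = (SSet.boundary m).ι ≫ uA0 := by
      apply fibFst_cancel ι X.carrier e
      simp only [Category.assoc]
      rw [← fibFst_whisker i ι X.carrier e, ← Category.assoc, hF0, Category.assoc, hUw, huA0]
      have h := congrArg (fun q => q ≫ uo) hbe0
      simp only [Category.assoc] at h
      rw [h]
    have c3f : F0 ≫ fibPush (ι ≫ i) f.1 e = (SSet.boundary m).ι ≫ vY0 := by
      apply fibFst_cancel (ι ≫ i) Y.carrier (fApp f.1 e)
      simp only [Category.assoc]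
      rw [← fibFst_push (ι ≫ i) f.1 e, ← Category.assoc, hF0, Category.assoc, hUp, hvY0]
      have h := congrArg (fun q => q ≫ vo) hbe0
      simp only [Category.assoc] at h
      rw [h]
    obtain ⟨l0, hl0a, hl0b, hl0c⟩ := (gap_lift_iff ((SSet.boundary m).ι)
      (fibRes i ι X.carrier e) (fibPush (ι ≫ i) f.1 e) (fibPush ι f.1 e)
      (fibRes i ι Y.carrier (fApp f.1 e)) (fibSq i ι f.1 e)).mp (h2 e he m)
      F0 uA0 vY0 c1f c2f c3f
    have hL0bd : (SSet.boundary m).ι ≫ (l0 ≫ fibFst (ι ≫ i) X.carrier e)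
        = bEnd m 0 ≫ U := by
      rw [← Category.assoc, hl0a, hF0]
    have hL0a : (l0 ≫ fibFst (ι ≫ i) X.carrier e) ≫ underWhisker i X.carrier
        = constTo0 m ≫ uo := by
      rw [Category.assoc, fibFst_whisker i ι X.carrier e, ← Category.assoc, hl0b, huA0]
    have hL0b : (l0 ≫ fibFst (ι ≫ i) X.carrier e) ≫ underPush Δ[n] f.1
        = constTo0 m ≫ vo := by
      rw [Category.assoc, fibFst_push (ι ≫ i) f.1 e, ← Category.assoc, hl0c, hvY0]
    -- Step C: final prism lifting
    have Hfw : (contr m ≫ uo) ≫ underPush A f.1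
        = (contr m ≫ vo) ≫ underWhisker i Y.carrier := by
      simp only [Category.assoc]
      rw [huvo]
    have hT : (l0 ≫ fibFst (ι ≫ i) X.carrier e) ≫ underGap i f.1
        = cylIncl 0 Δ[m] ≫ pullback.lift (contr m ≫ uo) (contr m ≫ vo) Hfw := by
      apply pullback.hom_ext
      · simp only [Category.assoc]
        rw [hgfst, pullback.lift_fst]
        have h1 := hL0a
        simp only [Category.assoc] at h1
        rw [h1]
        have h2 := congrArg (fun q => q ≫ uo) (cylIncl_contr_zero m)
        simp only [Category.assoc] at h2
        rw [h2]
      · simp only [Category.assoc]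
        rw [hgsnd, pullback.lift_snd]
        have h1 := hL0b
        simp only [Category.assoc] at h1
        rw [h1]
        have h2 := congrArg (fun q => q ≫ vo) (cylIncl_contr_zero m)
        simp only [Category.assoc] at h2
        rw [h2]
    have hUB : U ≫ underGap i f.1
        = bIncl m ≫ pullback.lift (contr m ≫ uo) (contr m ≫ vo) Hfw := by
      apply pullback.hom_ext
      · simp only [Category.assoc]
        rw [hgfst, pullback.lift_fst, hUw]
      · simp only [Category.assoc]
        rw [hgsnd, pullback.lift_snd, hUp]
    obtain ⟨L, hLg, hL2, hL3⟩ := cyl_lift (underGap i f.1) hKan m 0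
      (l0 ≫ fibFst (ι ≫ i) X.carrier e) U
      (pullback.lift (contr m ≫ uo) (contr m ≫ vo) Hfw) hT hUB hL0bd.symm
    have hfinb : (SSet.boundary m).ι ≫ (cylIncl 1 Δ[m] ≫ L) = Fo := by
      rw [← Category.assoc, ← bEnd_bIncl, Category.assoc, hL3, hU2]
    have hfina : (cylIncl 1 Δ[m] ≫ L) ≫ underWhisker i X.carrier = uo := by
      simp only [Category.assoc]
      rw [← hgfst, ← Category.assoc L, hLg, pullback.lift_fst, ← Category.assoc,
        cylIncl_contr_one, Category.id_comp]
    have hfinc : (cylIncl 1 Δ[m] ≫ L) ≫ underPush Δ[n] f.1 = vo := by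
      simp only [Category.assoc]
      rw [← hgsnd, ← Category.assoc L, hLg, pullback.lift_snd, ← Category.assoc,
        cylIncl_contr_one, Category.id_comp]
    -- Step D: mark the solution
    obtain ⟨lm, hlm⟩ := mUnder_factor i ι X (cylIncl 1 Δ[m] ≫ L) u (by rw [hfina, huo]; rfl)
    refine ⟨lm, ?_, ?_, ?_⟩
    · apply mUnderIncl_cancel
      erw [Category.assoc, hlm, hfinb, hFo]
      rfl
    · apply mUnderIncl_cancel
      erw [Category.assoc, hWX, ← Category.assoc, hlm, hfina, huo]
      rfl
    · apply mUnderIncl_cancel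
      erw [Category.assoc, hPXY, ← Category.assoc, hlm, hfinc, hvo]
      rfl

end Paper
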